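/- arXiv:0911.2256 — 3 statements merged into one kernel-verified Lean document; each statement's English description precedes it below -/
import Mathlib

section
/- Let m ≥ 2 and r > 0. There exists a constant C > 0 (depending only on m and r) such that for every real polynomial f(x) = a₂x² + a₃x³ + ⋯ + a_m x^m with f''(x) ≥ 0 for all x ∈ [0, r], one has f(x) ≥ C(|a₂|x² + |a₃|x³ + ⋯ + |a_m|x^m) for all x ∈ [0, r]. -/
open Complex Metric Set Filter Asymptotics

noncomputable section

/-- Subharmonicity via continuity and the sub-mean-value property on circles. -/
def SubharmonicOn (u : ℂ → ℝ) (s : Set ℂ) : Prop :=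
  ContinuousOn u s ∧ ∀ z : ℂ, ∀ r : ℝ, 0 < r → closedBall z r ⊆ s →
    u z ≤ (2 * Real.pi)⁻¹ *
      ∫ θ in (0:ℝ)..(2 * Real.pi), u (z + (r : ℂ) * Complex.exp (θ * Complex.I))

/-- The mixed Wirtinger derivative ∂²u/∂z∂z̄ = (1/4)Δu of a real-valued function on ℂ. -/
def mixedDeriv (u : ℂ → ℝ) (z : ℂ) : ℝ :=
  (1 / 4) * (fderiv ℝ (fun w => fderiv ℝ u w 1) z 1 +
             fderiv ℝ (fun w => fderiv ℝ u w Complex.I) z Complex.I)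

/-- The Levi form Σᵢⱼ ∂²u/∂zᵢ∂z̄ⱼ(P) ξᵢ ξ̄ⱼ, computed along the complex line P + tξ. -/
def leviForm {n : ℕ} (u : (Fin n → ℂ) → ℝ) (P ξ : Fin n → ℂ) : ℝ :=
  mixedDeriv (fun t => u (P + t • ξ)) 0

/-- Plurisubharmonicity: subharmonic along every complex line. -/
def PSHOn {n : ℕ} (u : (Fin n → ℂ) → ℝ) (s : Set (Fin n → ℂ)) : Prop :=
  ∀ a b : Fin n → ℂ, SubharmonicOn (fun t => u (a + t • b)) {t : ℂ | a + t • b ∈ s}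

/-- `log u` plurisubharmonic, via the standard characterization: `u ≥ 0` and
`u·|e^{L}|` is plurisubharmonic for every complex-linear functional `L`. -/
def LogPSHOn {n : ℕ} (u : (Fin n → ℂ) → ℝ) (s : Set (Fin n → ℂ)) : Prop :=
  (∀ z ∈ s, 0 ≤ u z) ∧
  ∀ L : (Fin n → ℂ) →ₗ[ℂ] ℂ,
    PSHOn (fun z => u z * ‖Complex.exp (L z)‖) s

/-- `log u` subharmonic on a planar set, via the analogous characterization. -/
def LogSubharmonicOn (u : ℂ → ℝ) (s : Set ℂ) : Prop :=
  (∀ z ∈ s, 0 ≤ u z) ∧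
  ∀ α : ℂ, SubharmonicOn (fun z => u z * ‖Complex.exp (α * z)‖) s

/-- Candidate functions for the Sibony metric at `P`. -/
def SibonyCandidate {n : ℕ} (Ω : Set (Fin n → ℂ)) (P : Fin n → ℂ)
    (u : (Fin n → ℂ) → ℝ) : Prop :=
  ContDiffAt ℝ 2 u P ∧ u P = 0 ∧ (∀ z ∈ Ω, 0 ≤ u z ∧ u z ≤ 1) ∧ LogPSHOn u Ω

/-- The Sibony metric. -/
def sibonyMetric {n : ℕ} (Ω : Set (Fin n → ℂ)) (P ξ : Fin n → ℂ) : ℝ :=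
  sSup {x : ℝ | ∃ u, SibonyCandidate Ω P u ∧ x = Real.sqrt (leviForm u P ξ)}

/-- The Carathéodory metric. -/
def caratheodoryMetric {n : ℕ} (Ω : Set (Fin n → ℂ)) (P ξ : Fin n → ℂ) : ℝ :=
  sSup {x : ℝ | ∃ f : (Fin n → ℂ) → ℂ, DifferentiableOn ℂ f Ω ∧
    (∀ z ∈ Ω, ‖f z‖ < 1) ∧ f P = 0 ∧ x = ‖fderiv ℂ f P ξ‖}

/-- The Kobayashi metric. -/
def kobayashiMetric {n : ℕ} (Ω : Set (Fin n → ℂ)) (P ξ : Fin n → ℂ) : ℝ :=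
  sInf {α : ℝ | 0 < α ∧ ∃ φ : ℂ → (Fin n → ℂ), DifferentiableOn ℂ φ (ball 0 1) ∧
    (∀ z ∈ ball (0:ℂ) 1, φ z ∈ Ω) ∧ φ 0 = P ∧ fderiv ℂ φ 0 1 = α⁻¹ • ξ}


noncomputable def sdF (m : ℕ) (c : ℕ → ℝ) (x : ℝ) : ℝ :=
  ∑ k ∈ Finset.Icc 2 m, c k * (↑k * (↑(k - 1) * x ^ (k - 1 - 1)))

lemma hd1 (m : ℕ) (c : ℕ → ℝ) (x : ℝ) :
    HasDerivAt (fun y : ℝ => ∑ k ∈ Finset.Icc 2 m, c k * y ^ k)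
      (∑ k ∈ Finset.Icc 2 m, c k * (↑k * x ^ (k - 1))) x :=
  HasDerivAt.fun_sum fun k _ => (hasDerivAt_pow k x).const_mul (c k)

lemma hd2 (m : ℕ) (c : ℕ → ℝ) (x : ℝ) :
    HasDerivAt (fun y : ℝ => ∑ k ∈ Finset.Icc 2 m, c k * (↑k * y ^ (k - 1)))
      (sdF m c x) x :=
  HasDerivAt.fun_sum fun k _ => (((hasDerivAt_pow (k-1) x).const_mul (k:ℝ)).const_mul (c k))

lemma deriv1 (m : ℕ) (c : ℕ → ℝ) :
    deriv (fun y : ℝ => ∑ k ∈ Finset.Icc 2 m, c k * y ^ k)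
      = fun x => ∑ k ∈ Finset.Icc 2 m, c k * (↑k * x ^ (k - 1)) :=
  funext fun x => (hd1 m c x).deriv

lemma deriv2 (m : ℕ) (c : ℕ → ℝ) :
    deriv (deriv (fun y : ℝ => ∑ k ∈ Finset.Icc 2 m, c k * y ^ k)) = sdF m c := by
  rw [deriv1]; exact funext fun x => (hd2 m c x).deriv

lemma mono_poly (m : ℕ) (c : ℕ → ℝ) (X : ℝ) (hX : 0 ≤ X)
    (h : ∀ t ∈ Icc (0:ℝ) X, 0 ≤ sdF m c t) :
    MonotoneOn (fun y : ℝ => ∑ k ∈ Finset.Icc 2 m, c k * y ^ k) (Icc 0 X) := by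
  have h1 : MonotoneOn (fun x : ℝ => ∑ k ∈ Finset.Icc 2 m, c k * (↑k * x ^ (k - 1)))
      (Icc 0 X) := by
    apply monotoneOn_of_deriv_nonneg (convex_Icc 0 X)
    · exact Continuous.continuousOn (by continuity)
    · exact fun x _ => (hd2 m c x).differentiableAt.differentiableWithinAt
    · intro x hx
      rw [(hd2 m c x).deriv]
      exact h x (interior_subset hx)
  have h1z : (0:ℝ) ∈ Icc (0:ℝ) X := ⟨le_refl 0, hX⟩
  have hzero : (∑ k ∈ Finset.Icc 2 m, c k * (↑k * (0:ℝ) ^ (k - 1))) = 0 := by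
    apply Finset.sum_eq_zero
    intro k hk
    have : 2 ≤ k := (Finset.mem_Icc.mp hk).1
    rw [zero_pow (by omega : k - 1 ≠ 0)]; ring
  apply monotoneOn_of_deriv_nonneg (convex_Icc 0 X)
  · exact Continuous.continuousOn (by continuity)
  · exact fun x _ => (hd1 m c x).differentiableAt.differentiableWithinAt
  · intro x hx
    rw [(hd1 m c x).deriv]
    have hx' := interior_subset hx
    calc (0:ℝ) = ∑ k ∈ Finset.Icc 2 m, c k * (↑k * (0:ℝ) ^ (k - 1)) := hzero.symm
      _ ≤ _ := h1 h1z hx' hx'.1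

lemma nonneg_poly (m : ℕ) (c : ℕ → ℝ) (X : ℝ) (hX : 0 ≤ X)
    (h : ∀ t ∈ Icc (0:ℝ) X, 0 ≤ sdF m c t) (x : ℝ) (hx : x ∈ Icc (0:ℝ) X) :
    0 ≤ ∑ k ∈ Finset.Icc 2 m, c k * x ^ k := by
  have hzero : (∑ k ∈ Finset.Icc 2 m, c k * (0:ℝ) ^ k) = 0 := by
    apply Finset.sum_eq_zero
    intro k hk
    have : 2 ≤ k := (Finset.mem_Icc.mp hk).1
    rw [zero_pow (by omega : k ≠ 0)]; ring
  calc (0:ℝ) = ∑ k ∈ Finset.Icc 2 m, c k * (0:ℝ) ^ k := hzero.symm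
    _ ≤ _ := mono_poly m c X hX h ⟨le_refl 0, hX⟩ hx hx.1

def SS (m : ℕ) : Set (ℕ → ℝ) :=
  {b | (∀ k, k ∉ Finset.Icc 2 m → b k = 0) ∧ (∑ k ∈ Finset.Icc 2 m, |b k|) = 1 ∧
     ∀ s ∈ Icc (0:ℝ) 1, 0 ≤ sdF m b s}

lemma sdF_cont (m : ℕ) (s : ℝ) : Continuous (fun b : ℕ → ℝ => sdF m b s) := by
  apply continuous_finset_sum
  intro k _
  exact (continuous_apply k).mul continuous_const

lemma SS_closed (m : ℕ) : IsClosed (SS m) := by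
  have h1 : IsClosed {b : ℕ → ℝ | ∀ k, k ∉ Finset.Icc 2 m → b k = 0} := by
    have he : {b : ℕ → ℝ | ∀ k, k ∉ Finset.Icc 2 m → b k = 0}
        = ⋂ k ∈ {k | k ∉ Finset.Icc 2 m}, {b : ℕ → ℝ | b k = 0} := by
      ext b; simp
    rw [he]
    exact isClosed_biInter fun k _ => isClosed_eq (continuous_apply k) continuous_const
  have h2 : IsClosed {b : ℕ → ℝ | (∑ k ∈ Finset.Icc 2 m, |b k|) = 1} :=
    isClosed_eq (continuous_finset_sum _ fun k _ => (continuous_apply k).abs) continuous_const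
  have h3 : IsClosed {b : ℕ → ℝ | ∀ s ∈ Icc (0:ℝ) 1, 0 ≤ sdF m b s} := by
    have he : {b : ℕ → ℝ | ∀ s ∈ Icc (0:ℝ) 1, 0 ≤ sdF m b s}
        = ⋂ s ∈ Icc (0:ℝ) 1, {b : ℕ → ℝ | 0 ≤ sdF m b s} := by
      ext b; simp
    rw [he]
    exact isClosed_biInter fun s _ => isClosed_le continuous_const (sdF_cont m s)
  have : SS m = _ ∩ (_ ∩ _) := rfl
  rw [this]
  exact h1.inter (h2.inter h3)

lemma SS_compact (m : ℕ) : IsCompact (SS m) := by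
  apply IsCompact.of_isClosed_subset
    (isCompact_univ_pi (fun k : ℕ => isCompact_Icc (a := (-1:ℝ)) (b := 1)))
    (SS_closed m)
  intro b hb
  intro k _
  by_cases hk : k ∈ Finset.Icc 2 m
  · have h1 : |b k| ≤ ∑ j ∈ Finset.Icc 2 m, |b j| :=
      Finset.single_le_sum (fun j _ => abs_nonneg (b j)) hk
    rw [hb.2.1] at h1
    exact abs_le.mp h1
  · rw [hb.1 k hk]; constructor <;> norm_num

lemma SS_nonempty (m : ℕ) (hm : 2 ≤ m) : (SS m).Nonempty := by
  refine ⟨fun k => if k = 2 then 1 else 0, ?_, ?_, ?_⟩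
  · intro k hk
    have : k ≠ 2 := by rintro rfl; exact hk (Finset.mem_Icc.mpr ⟨le_refl 2, hm⟩)
    simp [this]
  · rw [Finset.sum_eq_single 2]
    · norm_num
    · intro k _ hk; simp [hk]
    · intro h; exact absurd (Finset.mem_Icc.mpr ⟨le_refl 2, hm⟩) h
  · intro s _
    unfold sdF
    rw [Finset.sum_eq_single 2]
    · norm_num
    · intro k _ hk; simp [hk]
    · intro h; exact absurd (Finset.mem_Icc.mpr ⟨le_refl 2, hm⟩) h

lemma poly_vanish (m : ℕ) (b : ℕ → ℝ)
    (hvan : ∀ s ∈ Icc (0:ℝ) 1, (∑ k ∈ Finset.Icc 2 m, b k * s ^ k) = 0) :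
    ∀ k ∈ Finset.Icc 2 m, b k = 0 := by
  set p : Polynomial ℝ := ∑ k ∈ Finset.Icc 2 m, Polynomial.C (b k) * Polynomial.X ^ k with hp
  have hpz : p = 0 := by
    apply Polynomial.eq_zero_of_infinite_isRoot
    have hsub : Icc (0:ℝ) 1 ⊆ {x | p.IsRoot x} := by
      intro s hs
      simp only [Set.mem_setOf_eq, Polynomial.IsRoot, hp]
      rw [Polynomial.eval_finset_sum]
      simpa using hvan s hs
    exact (Set.Icc_infinite (by norm_num)).mono hsub
  intro k hk
  have := congrArg (fun q => Polynomial.coeff q k) hpz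
  simp only [hp, Polynomial.finset_sum_coeff, Polynomial.coeff_C_mul, Polynomial.coeff_X_pow,
    Polynomial.coeff_zero] at this
  rw [Finset.sum_eq_single k] at this
  · simpa using this
  · intro j _ hj; simp [Ne.symm hj]
  · intro h; exact absurd hk h

lemma SS_pos (m : ℕ) : ∀ b ∈ SS m, 0 < ∑ k ∈ Finset.Icc 2 m, b k := by
  intro b hb
  obtain ⟨hzero, hsum1, hconv⟩ := hb
  by_contra hle
  push_neg at hle
  have hmono := mono_poly m b 1 zero_le_one hconv
  have hval : ∀ s ∈ Icc (0:ℝ) 1, (∑ k ∈ Finset.Icc 2 m, b k * s ^ k) = 0 := by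
    intro s hs
    have h1 : 0 ≤ ∑ k ∈ Finset.Icc 2 m, b k * s ^ k :=
      nonneg_poly m b 1 zero_le_one hconv s hs
    have h2 : (∑ k ∈ Finset.Icc 2 m, b k * s ^ k) ≤ ∑ k ∈ Finset.Icc 2 m, b k * (1:ℝ) ^ k :=
      hmono hs ⟨zero_le_one, le_refl 1⟩ hs.2
    simp only [one_pow, mul_one] at h2
    linarith
  have hcoef := poly_vanish m b hval
  have hz : (∑ k ∈ Finset.Icc 2 m, |b k|) = 0 :=
    Finset.sum_eq_zero fun k hk => by rw [hcoef k hk]; simp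
  rw [hsum1] at hz; norm_num at hz

/-- Bruna–Nagel–Wainger lemma: for convex polynomials `f = Σ_{k=2}^m aₖ xᵏ` on `[0, r]`,
`f(x) ≥ C Σ |aₖ| xᵏ` with `C` depending only on `m` and `r`. -/
theorem stmt0 (m : ℕ) (hm : 2 ≤ m) (r : ℝ) (hr : 0 < r) :
    ∃ C : ℝ, 0 < C ∧ ∀ a : ℕ → ℝ,
      (∀ x ∈ Icc (0:ℝ) r,
        0 ≤ deriv (deriv (fun y : ℝ => ∑ k ∈ Finset.Icc 2 m, a k * y ^ k)) x) →
      ∀ x ∈ Icc (0:ℝ) r,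
        C * ∑ k ∈ Finset.Icc 2 m, |a k| * x ^ k ≤ ∑ k ∈ Finset.Icc 2 m, a k * x ^ k := by
  classical
  obtain ⟨b₀, hb₀S, hmin⟩ := (SS_compact m).exists_isMinOn (SS_nonempty m hm)
    ((continuous_finset_sum _ fun k _ => continuous_apply k).continuousOn :
      ContinuousOn (fun b : ℕ → ℝ => ∑ k ∈ Finset.Icc 2 m, b k) (SS m))
  refine ⟨∑ k ∈ Finset.Icc 2 m, b₀ k, SS_pos m b₀ hb₀S, ?_⟩
  intro a hconv x hx
  set C := ∑ k ∈ Finset.Icc 2 m, b₀ k with hC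
  have hconv' : ∀ t ∈ Icc (0:ℝ) r, 0 ≤ sdF m a t := by
    intro t ht
    have := hconv t ht
    rwa [deriv2] at this
  obtain ⟨hx0, hxr⟩ := hx
  set N := ∑ k ∈ Finset.Icc 2 m, |a k| * x ^ k with hN
  have hNnn : 0 ≤ N :=
    Finset.sum_nonneg fun k _ => mul_nonneg (abs_nonneg _) (pow_nonneg hx0 k)
  rcases eq_or_lt_of_le hNnn with hN0 | hN0
  · have hfnn : 0 ≤ ∑ k ∈ Finset.Icc 2 m, a k * x ^ k :=
      nonneg_poly m a x hx0 (fun t ht => hconv' t ⟨ht.1, le_trans ht.2 hxr⟩) x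
        ⟨hx0, le_refl x⟩
    calc C * N = 0 := by rw [← hN0]; ring
      _ ≤ _ := hfnn
  · have hxpos : 0 < x := by
      rcases eq_or_lt_of_le hx0 with h | h
      · exfalso
        have hNz : N = 0 := by
          rw [hN]
          apply Finset.sum_eq_zero
          intro k hk
          have h2 : 2 ≤ k := (Finset.mem_Icc.mp hk).1
          rw [← h, zero_pow (by omega : k ≠ 0), mul_zero]
        linarith
      · exact h
    set b : ℕ → ℝ := fun k => if k ∈ Finset.Icc 2 m then a k * x ^ k / N else 0 with hb
    have hbS : b ∈ SS m := by
      refine ⟨?_, ?_, ?_⟩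
      · intro k hk; simp only [hb]; rw [if_neg hk]
      · have habs : ∀ k ∈ Finset.Icc 2 m, |b k| = |a k| * x ^ k / N := by
          intro k hk
          simp only [hb, if_pos hk]
          rw [abs_div, abs_mul, _root_.abs_pow, _root_.abs_of_nonneg hx0, _root_.abs_of_nonneg hNnn]
        rw [Finset.sum_congr rfl habs, ← Finset.sum_div, ← hN, div_self hN0.ne']
      · intro s hs
        unfold sdF
        have heq : ∀ k ∈ Finset.Icc 2 m, b k * (↑k * (↑(k-1) * s ^ (k-1-1)))
            = (x^2 / N) * (a k * (↑k * (↑(k-1) * (s*x) ^ (k-1-1)))) := by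
          intro k hk
          have h2 : 2 ≤ k := (Finset.mem_Icc.mp hk).1
          have hxk : x ^ k = x ^ (k-1-1) * x ^ 2 := by
            rw [← pow_add]; congr 1; omega
          simp only [hb, if_pos hk]
          rw [mul_pow, hxk]
          field_simp
        rw [Finset.sum_congr rfl heq, ← Finset.mul_sum]
        apply mul_nonneg (div_nonneg (sq_nonneg x) hNnn)
        exact hconv' (s*x) ⟨mul_nonneg hs.1 hx0,
          by nlinarith [hs.1, hs.2, hx0, hxr]⟩
    have hsum : ∑ k ∈ Finset.Icc 2 m, b k = (∑ k ∈ Finset.Icc 2 m, a k * x ^ k) / N := by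
      rw [Finset.sum_div]
      apply Finset.sum_congr rfl
      intro k hk
      simp only [hb]; rw [if_pos hk]
    have hCb : C ≤ (∑ k ∈ Finset.Icc 2 m, a k * x ^ k) / N := by
      rw [← hsum]
      exact isMinOn_iff.mp hmin b hbS
    exact (le_div_iff₀ hN0).mp hCb
end
end

section
/- Let u : 𝔻 → ℝ be a function on the unit disc 𝔻 ⊂ ℂ such that (1) u(0) = 0 and u is C² near 0, (2) 0 ≤ u(z) ≤ 1 for all z ∈ 𝔻, and (3) z ↦ u(z)/|z|² is subharmonic on 𝔻. Then ∂²u/∂z∂z̄ (0) ≤ 1. -/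
open Complex Metric Set Filter Asymptotics

noncomputable section

lemma circlePt (z : ℂ) (r θ : ℝ) :
    z + (r:ℂ) * Complex.exp (θ * Complex.I) = circleMap z r θ := rfl

lemma meanvalue_holo {f : ℂ → ℂ} {c : ℂ} {r : ℝ} (hr : 0 < r)
    (hd : DifferentiableOn ℂ f (closedBall c r)) :
    ∫ θ in (0:ℝ)..(2*Real.pi), f (circleMap c r θ) = (2*Real.pi : ℂ) * f c := by
  have h := hd.circleIntegral_sub_inv_smul (mem_ball_self hr)
  rw [circleIntegral] at h
  have hne : ∀ θ : ℝ, circleMap 0 r θ ≠ 0 := fun θ => by simp [circleMap]; exact hr.ne'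
  have heq : ∀ θ : ℝ, deriv (circleMap c r) θ • (circleMap c r θ - c)⁻¹ • f (circleMap c r θ)
      = I * f (circleMap c r θ) := by
    intro θ
    rw [deriv_circleMap, circleMap_sub_center, smul_eq_mul, smul_eq_mul]
    field_simp [hne θ]
  simp only [heq] at h
  rw [intervalIntegral.integral_const_mul] at h
  have hI : (I : ℂ) ≠ 0 := I_ne_zero
  apply mul_left_cancel₀ hI
  rw [h, smul_eq_mul]; ring

lemma circleMap_abs_pos {c : ℂ} {r : ℝ} (hr : 0 < r) (hrc : r < ‖c‖) (θ : ℝ) :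
    0 < ‖circleMap c r θ‖ := by
  have h1 : ‖circleMap c r θ - c‖ = r := by
    rw [circleMap_sub_center, norm_circleMap_zero, abs_of_pos hr]
  have h2 : ‖c‖ - ‖circleMap c r θ‖
      ≤ ‖circleMap c r θ - c‖ := by
    simpa only [norm_sub_rev (circleMap c r θ) c] using
      norm_sub_norm_le c (circleMap c r θ)
  rw [h1] at h2
  linarith

lemma log_abs_meanvalue {c : ℂ} {r : ℝ} (hr : 0 < r) (hrc : r < ‖c‖) :
    ∫ θ in (0:ℝ)..(2*Real.pi), Real.log (‖circleMap c r θ‖)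
      = (2*Real.pi) * Real.log (‖c‖) := by
  have hc : c ≠ 0 := by
    intro h; rw [h] at hrc; simp at hrc; linarith
  have habsc : 0 < ‖c‖ := norm_pos_iff.mpr hc
  -- the holomorphic branch of log on the closed ball
  set f : ℂ → ℂ := fun z => Complex.log (z / c) with hf
  have hslit : ∀ z ∈ closedBall c r, z / c ∈ Complex.slitPlane := by
    intro z hz
    rw [Complex.mem_slitPlane_iff]
    left
    have h1 : ‖1 - z / c‖ < 1 := by
      have : (1 : ℂ) - z / c = (c - z) / c := by field_simp
      rw [this, norm_div]
      rw [div_lt_one habsc]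
      calc ‖c - z‖ = ‖z - c‖ := by rw [← norm_neg]; ring_nf
        _ ≤ r := by simpa [Complex.dist_eq] using mem_closedBall.mp hz
        _ < ‖c‖ := hrc
    have h2 : (1 - z / c).re ≤ ‖1 - z / c‖ := Complex.re_le_norm _
    have h3 : (z / c).re = 1 - (1 - z / c).re := by simp [Complex.sub_re]
    linarith
  have hd : DifferentiableOn ℂ f (closedBall c r) := fun z hz =>
    ((differentiableAt_id.div_const c).clog (hslit z hz)).differentiableWithinAt
  have h := meanvalue_holo hr hd
  have hfc : f c = 0 := by simp [hf, div_self hc]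
  rw [hfc, mul_zero] at h
  -- take real parts
  have hcf : ∀ w ∈ closedBall c r, ContinuousAt f w := fun w hw =>
    ContinuousAt.comp (g := Complex.log) (f := fun z : ℂ => z / c) (x := w)
      (continuousAt_clog (hslit w hw)) (continuousAt_id.div_const c)
  have hint : IntervalIntegrable (fun θ => f (circleMap c r θ)) MeasureTheory.volume 0 (2*Real.pi) := by
    apply ContinuousOn.intervalIntegrable
    exact ContinuousOn.comp (fun w hw => (hcf w hw).continuousWithinAt)
      (continuous_circleMap c r).continuousOn
      (fun θ _ => circleMap_mem_closedBall c hr.le θ)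
  have hre := Complex.reCLM.intervalIntegral_comp_comm hint
  rw [h] at hre
  simp only [Complex.reCLM_apply, Complex.zero_re] at hre
  have hre' : ∀ θ : ℝ, (f (circleMap c r θ)).re
      = Real.log (‖circleMap c r θ‖) - Real.log (‖c‖) := by
    intro θ
    rw [hf]
    simp only [Complex.log_re, norm_div]
    exact Real.log_div (circleMap_abs_pos hr hrc θ).ne' habsc.ne'
  simp only [hre'] at hre
  have hgint : IntervalIntegrable (fun θ => Real.log (‖circleMap c r θ‖))
      MeasureTheory.volume 0 (2*Real.pi) := by
    apply ContinuousOn.intervalIntegrable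
    exact ContinuousOn.comp Real.continuousOn_log
      ((continuous_norm.comp (continuous_circleMap c r)).continuousOn)
      (fun θ _ => (circleMap_abs_pos hr hrc θ).ne')
  rw [intervalIntegral.integral_sub hgint intervalIntegrable_const,
    intervalIntegral.integral_const, sub_eq_zero] at hre
  rw [hre]
  simp [smul_eq_mul]

lemma sq_abs_meanvalue (c : ℂ) (r : ℝ) :
    ∫ θ in (0:ℝ)..(2*Real.pi), ‖circleMap c r θ‖^2
      = (2*Real.pi) * (‖c‖^2 + r^2) := by
  have hpt : ∀ θ : ℝ, ‖circleMap c r θ‖^2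
      = (‖c‖^2 + r^2) + ((2*r*c.re) * Real.cos θ + (2*r*c.im) * Real.sin θ) := by
    intro θ
    rw [Complex.sq_norm, Complex.sq_norm, circleMap, Complex.exp_mul_I]
    simp only [Complex.normSq_apply, Complex.add_re, Complex.add_im, Complex.mul_re,
      Complex.mul_im, Complex.ofReal_re, Complex.ofReal_im, Complex.I_re, Complex.I_im,
      Complex.ofReal_cos, Complex.ofReal_sin, Complex.cos_ofReal_re, Complex.sin_ofReal_re,
      Complex.cos_ofReal_im, Complex.sin_ofReal_im]
    ring_nf
    linear_combination (r^2) * (Real.sin_sq_add_cos_sq θ)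
  simp only [hpt]
  have hi1 : IntervalIntegrable (fun θ : ℝ => (2*r*c.re) * Real.cos θ)
      MeasureTheory.volume 0 (2*Real.pi) :=
    (continuous_const.mul Real.continuous_cos).intervalIntegrable _ _
  have hi2 : IntervalIntegrable (fun θ : ℝ => (2*r*c.im) * Real.sin θ)
      MeasureTheory.volume 0 (2*Real.pi) :=
    (continuous_const.mul Real.continuous_sin).intervalIntegrable _ _
  rw [intervalIntegral.integral_add intervalIntegrable_const (hi1.add hi2),
    intervalIntegral.integral_const, intervalIntegral.integral_add hi1 hi2,
    intervalIntegral.integral_const_mul, intervalIntegral.integral_const_mul,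
    integral_cos, integral_sin]
  simp [Real.sin_two_pi, Real.cos_two_pi]

lemma subharmonic_add_log {v : ℂ → ℝ} (hv : SubharmonicOn v (ball (0:ℂ) 1 \ {0})) (η : ℝ) :
    SubharmonicOn (fun z => v z + η * Real.log (‖z‖)) (ball (0:ℂ) 1 \ {0}) := by
  constructor
  · apply hv.1.add
    apply ContinuousOn.mul continuousOn_const
    exact ContinuousOn.comp Real.continuousOn_log continuous_norm.continuousOn
      (fun z hz => norm_ne_zero_iff.mpr (by exact fun h => hz.2 h))
  · intro z r hr hsb
    have hz0 : z ≠ 0 := fun h => (hsb (by simp [h, mem_closedBall, hr.le])).2 rfl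
    have hrz : r < ‖z‖ := by
      by_contra hcon
      push_neg at hcon
      exact (hsb (by simp [mem_closedBall, Complex.dist_eq, hr.le, hcon] : (0:ℂ) ∈ closedBall z r)).2 rfl
    have hvint : IntervalIntegrable (fun θ => v (circleMap z r θ)) MeasureTheory.volume 0 (2*Real.pi) := by
      apply ContinuousOn.intervalIntegrable
      exact ContinuousOn.comp hv.1 (continuous_circleMap z r).continuousOn
        (fun θ _ => hsb (circleMap_mem_closedBall z hr.le θ))
    have hlint : IntervalIntegrable (fun θ => η * Real.log (‖circleMap z r θ‖))
        MeasureTheory.volume 0 (2*Real.pi) := by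
      apply ContinuousOn.intervalIntegrable
      apply ContinuousOn.mul continuousOn_const
      exact ContinuousOn.comp Real.continuousOn_log
        ((continuous_norm.comp (continuous_circleMap z r)).continuousOn)
        (fun θ _ => (circleMap_abs_pos hr hrz θ).ne')
    simp only [circlePt]
    rw [intervalIntegral.integral_add hvint hlint, intervalIntegral.integral_const_mul,
      log_abs_meanvalue hr hrz]
    have h1 := hv.2 z r hr hsb
    simp only [circlePt] at h1
    have hπ : (0:ℝ) < 2 * Real.pi := by positivity
    rw [mul_add]
    have : (2 * Real.pi)⁻¹ * (η * (2 * Real.pi * Real.log (‖z‖)))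
        = η * Real.log (‖z‖) := by
      field_simp
    rw [this]
    linarith

lemma annulus_max {w : ℂ → ℝ} (hw : SubharmonicOn w (ball (0:ℂ) 1 \ {0}))
    {δ R M : ℝ} (hδ : 0 < δ) (hδR : δ < R) (hR : R < 1)
    (hbd : ∀ y : ℂ, (‖y‖ = δ ∨ ‖y‖ = R) → w y ≤ M) :
    ∀ z : ℂ, δ ≤ ‖z‖ → ‖z‖ ≤ R → w z ≤ M := by
  have hRpos : 0 < R := hδ.trans hδR
  intro z hz1 hz2
  set K : Set ℂ := closedBall (0:ℂ) R \ ball (0:ℂ) δ with hK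
  have hmemK : ∀ y : ℂ, y ∈ K ↔ δ ≤ ‖y‖ ∧ ‖y‖ ≤ R := by
    intro y
    simp [hK, mem_diff, mem_closedBall_zero_iff, mem_ball_zero_iff,
      not_lt, and_comm]
  have hKsub : K ⊆ ball (0:ℂ) 1 \ {0} := by
    intro y hy
    rw [hmemK] at hy
    constructor
    · rw [mem_ball_zero_iff]; linarith
    · simp only [mem_singleton_iff]
      intro h
      rw [h] at hy
      simp at hy
      linarith [hy.1]
  have hKc : IsCompact K := (isCompact_closedBall 0 R).diff isOpen_ball
  refine le_of_forall_pos_le_add fun ε hε => ?_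
  set ε' : ℝ := ε / R^2 with hε'
  have hε'pos : 0 < ε' := by positivity
  set W : ℂ → ℝ := fun y => w y + ε' * ‖y‖ ^ 2 with hW
  have hWcont : ContinuousOn W K := by
    apply ContinuousOn.add (hw.1.mono hKsub)
    exact (continuous_const.mul (continuous_norm.pow 2)).continuousOn
  have hKne : ((R:ℂ)) ∈ K := by
    rw [hmemK]
    simp [Complex.norm_real, abs_of_pos hRpos, hδR.le]
  obtain ⟨y₀, hy₀K, hmax⟩ := hKc.exists_isMaxOn ⟨(R:ℂ), hKne⟩ hWcont
  have hy₀ := (hmemK y₀).mp hy₀K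
  have hbdy : ‖y₀‖ = δ ∨ ‖y₀‖ = R := by
    by_contra hcon
    push_neg at hcon
    have hint1 : δ < ‖y₀‖ := lt_of_le_of_ne hy₀.1 (Ne.symm hcon.1)
    have hint2 : ‖y₀‖ < R := lt_of_le_of_ne hy₀.2 hcon.2
    set r : ℝ := min ((‖y₀‖ - δ)/2) ((R - ‖y₀‖)/2) with hrdef
    have hrpos : 0 < r := by
      apply lt_min <;> linarith
    have hball : closedBall y₀ r ⊆ K := by
      intro y hy
      rw [hmemK]
      have hd : ‖y - y₀‖ ≤ r := by
        simpa [Complex.dist_eq] using mem_closedBall.mp hy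
      have h1 : ‖y₀‖ - ‖y‖ ≤ r := by
        calc ‖y₀‖ - ‖y‖ ≤ ‖y₀ - y‖ := by
              exact norm_sub_norm_le y₀ y
          _ = ‖y - y₀‖ := by rw [← norm_neg]; ring_nf
          _ ≤ r := hd
      have h2 : ‖y‖ - ‖y₀‖ ≤ r := by
        calc ‖y‖ - ‖y₀‖ ≤ ‖y - y₀‖ := by
              exact norm_sub_norm_le y y₀
          _ ≤ r := hd
      have hr1 : r ≤ (‖y₀‖ - δ)/2 := min_le_left _ _
      have hr2 : r ≤ (R - ‖y₀‖)/2 := min_le_right _ _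
      constructor <;> linarith
    have hsm := hw.2 y₀ r hrpos (hball.trans hKsub)
    simp only [circlePt] at hsm
    have hwint : IntervalIntegrable (fun θ => w (circleMap y₀ r θ)) MeasureTheory.volume 0 (2*Real.pi) := by
      apply ContinuousOn.intervalIntegrable
      exact ContinuousOn.comp hw.1 (continuous_circleMap y₀ r).continuousOn
        (fun θ _ => (hball.trans hKsub) (circleMap_mem_closedBall y₀ hrpos.le θ))
    have hsqint : IntervalIntegrable (fun θ => ε' * ‖circleMap y₀ r θ‖^2)
        MeasureTheory.volume 0 (2*Real.pi) :=
      (continuous_const.mul ((continuous_norm.comp (continuous_circleMap y₀ r)).pow 2)).intervalIntegrable _ _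
    have hπ : (0:ℝ) < 2 * Real.pi := by positivity
    -- upper bound for the average of W
    have hmono : ∫ θ in (0:ℝ)..(2*Real.pi), W (circleMap y₀ r θ)
        ≤ ∫ θ in (0:ℝ)..(2*Real.pi), W y₀ := by
      apply intervalIntegral.integral_mono_on hπ.le (hwint.add hsqint) intervalIntegrable_const
      intro θ _
      exact hmax (hball (circleMap_mem_closedBall y₀ hrpos.le θ))
    rw [intervalIntegral.integral_const] at hmono
    have hsplit : ∫ θ in (0:ℝ)..(2*Real.pi), W (circleMap y₀ r θ)
        = (∫ θ in (0:ℝ)..(2*Real.pi), w (circleMap y₀ r θ))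
          + ε' * (2*Real.pi) * (‖y₀‖^2 + r^2) := by
      rw [show (fun θ => W (circleMap y₀ r θ))
          = fun θ => w (circleMap y₀ r θ) + ε' * ‖circleMap y₀ r θ‖^2 from rfl]
      rw [intervalIntegral.integral_add hwint hsqint, intervalIntegral.integral_const_mul,
        sq_abs_meanvalue]
      ring
    have hlow : 2 * Real.pi * w y₀ ≤ ∫ θ in (0:ℝ)..(2*Real.pi), w (circleMap y₀ r θ) := by
      calc 2 * Real.pi * w y₀ ≤ 2 * Real.pi * ((2*Real.pi)⁻¹ *
            ∫ θ in (0:ℝ)..(2*Real.pi), w (circleMap y₀ r θ)) :=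
              mul_le_mul_of_nonneg_left hsm hπ.le
        _ = ∫ θ in (0:ℝ)..(2*Real.pi), w (circleMap y₀ r θ) := by
            rw [← mul_assoc, mul_inv_cancel₀ hπ.ne', one_mul]
    have hWy₀ : W y₀ = w y₀ + ε' * ‖y₀‖^2 := rfl
    have : 2 * Real.pi * ε' * r^2 ≤ 0 := by
      have hsm2 : (2 * Real.pi - 0) • W y₀ = 2*Real.pi * w y₀ + ε' * (2*Real.pi) * ‖y₀‖^2 := by
        rw [hWy₀]; simp [smul_eq_mul]; ring
      rw [hsplit] at hmono
      rw [hsm2] at hmono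
      nlinarith
    nlinarith [hπ, hε'pos, sq_nonneg r, mul_pos (mul_pos hπ hε'pos) (pow_pos hrpos 2)]
  -- boundary case: conclude
  have hzK : z ∈ K := (hmemK z).mpr ⟨hz1, hz2⟩
  have h1 : w z ≤ W z := by
    have : 0 ≤ ε' * ‖z‖ ^2 := by positivity
    simp only [hW]; linarith
  have h2 : W z ≤ W y₀ := hmax hzK
  have h3 : W y₀ ≤ M + ε' * R^2 := by
    have hwy₀ : w y₀ ≤ M := hbd y₀ hbdy
    have habs : ‖y₀‖^2 ≤ R^2 := by
      apply pow_le_pow_left₀ (norm_nonneg _) hy₀.2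
    simp only [hW]
    nlinarith
  have hεR : ε' * R^2 = ε := by
    rw [hε']; field_simp
  linarith

lemma deriv2_nonneg_of_localmin {φ : ℝ → ℝ} (h2 : ContDiffAt ℝ 2 φ 0)
    (hmin : ∀ᶠ t in nhds (0:ℝ), φ 0 ≤ φ t) : 0 ≤ deriv (deriv φ) 0 := by
  by_contra hcon
  push_neg at hcon
  set c : ℝ := deriv (deriv φ) 0 with hc
  have hd1 : ContDiffAt ℝ 1 (deriv φ) 0 := by
    have hfd : ContDiffAt ℝ 1 (fderiv ℝ φ) 0 := h2.fderiv_right (by norm_num)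
    have : deriv φ = fun t => fderiv ℝ φ t 1 := rfl
    rw [this]
    exact hfd.clm_apply contDiffAt_const
  have hψ : HasDerivAt (deriv φ) c 0 := (hd1.differentiableAt one_ne_zero).hasDerivAt
  have hminl : IsLocalMin φ 0 := hmin
  have hφ'0 : deriv φ 0 = 0 := hminl.deriv_eq_zero
  have hev1 : ∀ᶠ t in nhds (0:ℝ), ‖deriv φ t - deriv φ 0 - (t - 0) • c‖ ≤ (-c/2) * ‖t - 0‖ := by
    have := hψ.hasFDerivAt.isLittleO
    exact this.def (by linarith : (0:ℝ) < -c/2)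
  have hev2 : ∀ᶠ t in nhds (0:ℝ), ContDiffAt ℝ 2 φ t := h2.eventually (by norm_num)
  obtain ⟨a, hapos, ha⟩ := Metric.eventually_nhds_iff.mp (hev1.and (hmin.and hev2))
  set b : ℝ := a/2 with hb
  have hbpos : 0 < b := by positivity
  have hba : ∀ t : ℝ, t ∈ Icc (0:ℝ) b → dist t 0 < a := by
    intro t ht
    rw [Real.dist_eq, sub_zero, _root_.abs_of_nonneg ht.1]
    have := ht.2
    simp only [hb] at this ⊢
    linarith
  have hanti : StrictAntiOn φ (Icc (0:ℝ) b) := by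
    apply strictAntiOn_of_deriv_neg (convex_Icc _ _)
    · intro t ht
      exact ((ha (hba t ht)).2.2.continuousAt.continuousWithinAt)
    · intro t ht
      rw [interior_Icc] at ht
      have h1 := (ha (hba t ⟨ht.1.le, ht.2.le⟩)).1
      rw [hφ'0, sub_zero, sub_zero, smul_eq_mul, Real.norm_eq_abs, Real.norm_eq_abs,
        abs_of_pos ht.1] at h1
      have h2 : deriv φ t - t * c ≤ |deriv φ t - t * c| := le_abs_self _
      nlinarith [ht.1, hcon]
  have hmb : φ 0 ≤ φ b := (ha (hba b ⟨hbpos.le, le_refl b⟩)).2.1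
  have := hanti (left_mem_Icc.mpr hbpos.le) (right_mem_Icc.mpr hbpos.le) hbpos
  linarith

lemma key_dir {u : ℂ → ℝ} (hC2 : ContDiffAt ℝ 2 u 0) (h0 : u 0 = 0)
    (hu2 : ∀ z ∈ ball (0:ℂ) 1, u z ≤ ‖z‖ ^ 2) {e : ℂ} (he : ‖e‖ = 1) :
    fderiv ℝ (fun w => fderiv ℝ u w e) 0 e ≤ 2 := by
  set f : ℝ → ℝ := fun t => u (t • e) with hf
  -- eventual differentiability of u near 0
  have hue : ∀ᶠ w in nhds (0:ℂ), DifferentiableAt ℝ u w :=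
    (hC2.eventually (by norm_num)).mono fun w hw => hw.differentiableAt two_ne_zero
  have hsmul : Continuous (fun t : ℝ => t • e) := continuous_id.smul continuous_const
  have htend : Filter.Tendsto (fun t : ℝ => t • e) (nhds 0) (nhds (0:ℂ)) := by
    have := hsmul.tendsto 0
    simpa using this
  have hte : ∀ᶠ t in nhds (0:ℝ), DifferentiableAt ℝ u (t • e) := htend.eventually hue
  -- first derivative of f
  have hderiv_eq : ∀ᶠ t in nhds (0:ℝ), deriv f t = fderiv ℝ u (t • e) e := by
    filter_upwards [hte] with t ht
    have hD : HasDerivAt f (fderiv ℝ u (t • e) e) t := by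
      have h1 : HasDerivAt (fun s : ℝ => s • e) ((1:ℝ) • e) t := (hasDerivAt_id t).smul_const e
      have := ht.hasFDerivAt.comp_hasDerivAt t h1
      simp only [one_smul] at this; exact this
    exact hD.deriv
  -- G and its derivative
  set G : ℂ → ℝ := fun w => fderiv ℝ u w e with hG
  have hGdiff : DifferentiableAt ℝ G 0 := by
    have h1 : ContDiffAt ℝ 1 (fderiv ℝ u) 0 := hC2.fderiv_right (by norm_num)
    exact (h1.differentiableAt one_ne_zero).clm_apply (differentiableAt_const e)
  have hGd : HasDerivAt (fun t : ℝ => G (t • e)) (fderiv ℝ G 0 e) 0 := by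
    have h1 : HasDerivAt (fun s : ℝ => s • e) ((1:ℝ) • e) 0 := (hasDerivAt_id 0).smul_const e
    have h2 : HasFDerivAt G (fderiv ℝ G 0) ((0:ℝ) • e) := by
      rw [zero_smul]; exact hGdiff.hasFDerivAt
    have := h2.comp_hasDerivAt 0 h1
    simp only [one_smul] at this; exact this
  have hderiv_f : HasDerivAt (deriv f) (fderiv ℝ G 0 e) 0 := by
    apply hGd.congr_of_eventuallyEq
    filter_upwards [hderiv_eq] with t ht
    exact ht
  -- φ := t^2 - f t has a local min at 0
  set φ : ℝ → ℝ := fun t => t^2 - f t with hφ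
  have hfC2 : ContDiffAt ℝ 2 f 0 := by
    have hL : ContDiffAt ℝ 2 (fun t : ℝ => t • e) 0 := (contDiff_id.smul contDiff_const).contDiffAt
    have h0e : (fun t : ℝ => t • e) 0 = (0:ℂ) := by simp
    have := ContDiffAt.comp (0:ℝ) (h0e ▸ hC2) hL
    exact this
  have hφC2 : ContDiffAt ℝ 2 φ 0 := by
    apply ContDiffAt.sub
    · exact (contDiff_id.pow 2).contDiffAt
    · exact hfC2
  have hφmin : ∀ᶠ t in nhds (0:ℝ), φ 0 ≤ φ t := by
    have hball : ∀ᶠ t in nhds (0:ℝ), |t| < 1 := by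
      have : Set.Ioo (-1:ℝ) 1 ∈ nhds (0:ℝ) := Ioo_mem_nhds (by norm_num) (by norm_num)
      filter_upwards [this] with t ht
      rw [abs_lt]; exact ⟨ht.1, ht.2⟩
    filter_upwards [hball] with t ht
    have hmem : t • e ∈ ball (0:ℂ) 1 := by
      rw [mem_ball_zero_iff]
      rw [norm_smul, he, mul_one, Real.norm_eq_abs]
      exact ht
    have := hu2 (t • e) hmem
    have habs : ‖t • e‖ ^ 2 = t^2 := by
      rw [show (t • e : ℂ) = (t:ℂ) * e from rfl, norm_mul, he, mul_one, Complex.norm_real, Real.norm_eq_abs,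
        _root_.sq_abs]
    rw [habs] at this
    simp only [hφ, hf, zero_smul, h0, pow_two]
    nlinarith [this]
  have h2nn := deriv2_nonneg_of_localmin hφC2 hφmin
  -- compute deriv (deriv φ) 0
  have hfd : ∀ᶠ t in nhds (0:ℝ), DifferentiableAt ℝ f t := by
    filter_upwards [hte] with t ht
    have h1 : HasDerivAt (fun s : ℝ => s • e) ((1:ℝ) • e) t := (hasDerivAt_id t).smul_const e
    exact (ht.hasFDerivAt.comp_hasDerivAt t h1).differentiableAt
  have hφd : ∀ᶠ t in nhds (0:ℝ), deriv φ t = 2*t - deriv f t := by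
    filter_upwards [hfd] with t ht
    rw [hφ]
    rw [deriv_fun_sub (differentiableAt_pow 2) ht, deriv_pow_field 2]
    norm_num
  have hφ2 : deriv (deriv φ) 0 = 2 - fderiv ℝ G 0 e := by
    have hD : HasDerivAt (fun t : ℝ => 2*t - deriv f t) (2 - fderiv ℝ G 0 e) 0 := by
      have := ((hasDerivAt_id (0:ℝ)).const_mul 2).sub hderiv_f
      simpa [Pi.sub_def] using this
    have : HasDerivAt (deriv φ) (2 - fderiv ℝ G 0 e) 0 := by
      apply hD.congr_of_eventuallyEq
      filter_upwards [hφd] with t ht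
      exact ht
    exact this.deriv
  rw [hφ2] at h2nn
  linarith

/-- One-variable Schwarz-type lemma: if `u` is C² near 0 with `u 0 = 0`, `0 ≤ u ≤ 1`
on the unit disc, and `u(z)/|z|²` is subharmonic there, then `∂²u/∂z∂z̄(0) ≤ 1`. -/
theorem stmt1 (u : ℂ → ℝ) (hC2 : ContDiffAt ℝ 2 u 0) (h0 : u 0 = 0)
    (hb : ∀ z ∈ ball (0:ℂ) 1, 0 ≤ u z ∧ u z ≤ 1)
    (hsub : SubharmonicOn (fun z => u z / ‖z‖ ^ 2) (ball (0:ℂ) 1 \ {0})) :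
    mixedDeriv u 0 ≤ 1 := by
  classical
  -- Step 1 : Taylor-type bound near 0
  have hmin0 : IsLocalMin u 0 := by
    have hball : ball (0:ℂ) 1 ∈ nhds (0:ℂ) := ball_mem_nhds 0 one_pos
    filter_upwards [hball] with z hz
    rw [h0]; exact (hb z hz).1
  have hf0 : fderiv ℝ u 0 = 0 := hmin0.fderiv_eq_zero
  have hfd : ContDiffAt ℝ 1 (fderiv ℝ u) 0 := hC2.fderiv_right (by norm_num)
  obtain ⟨K, t, ht, hlip⟩ := hfd.exists_lipschitzOnWith
  have hue : ∀ᶠ w in nhds (0:ℂ), DifferentiableAt ℝ u w :=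
    (hC2.eventually (by norm_num)).mono fun w hw => hw.differentiableAt two_ne_zero
  obtain ⟨δ₀, hδ₀pos, hδ₀⟩ : ∃ δ₀ > 0, closedBall (0:ℂ) δ₀ ⊆
      {w | DifferentiableAt ℝ u w} ∩ t := by
    have hmem : {w : ℂ | DifferentiableAt ℝ u w} ∩ t ∈ nhds (0:ℂ) := Filter.inter_mem hue ht
    rcases Metric.mem_nhds_iff.mp hmem with ⟨ε, hε, hss⟩
    exact ⟨ε/2, by positivity, (closedBall_subset_ball (by linarith)).trans hss⟩
  set C : ℝ := (K : ℝ) with hCdef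
  have hCnn : (0:ℝ) ≤ C := K.2
  have hTaylor : ∀ z : ℂ, ‖z‖ ≤ δ₀ → u z ≤ C * ‖z‖^2 := by
    intro z hzd
    have hsub2 : closedBall (0:ℂ) (‖z‖) ⊆ closedBall (0:ℂ) δ₀ :=
      closedBall_subset_closedBall hzd
    have hders : ∀ w ∈ closedBall (0:ℂ) (‖z‖),
        HasFDerivWithinAt u (fderiv ℝ u w) (closedBall (0:ℂ) (‖z‖)) w :=
      fun w hw => ((hδ₀ (hsub2 hw)).1).hasFDerivAt.hasFDerivWithinAt
    have hbound : ∀ w ∈ closedBall (0:ℂ) (‖z‖),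
        ‖fderiv ℝ u w‖ ≤ C * ‖z‖ := by
      intro w hw
      have hwt : w ∈ t := (hδ₀ (hsub2 hw)).2
      have h0t : (0:ℂ) ∈ t := mem_of_mem_nhds ht
      have hdd := hlip.dist_le_mul w hwt 0 h0t
      rw [hf0, dist_zero_right, dist_zero_right] at hdd
      have hwz : ‖w‖ ≤ ‖z‖ := by
        simpa using mem_closedBall_zero_iff.mp hw
      calc ‖fderiv ℝ u w‖ ≤ (K:ℝ) * ‖w‖ := hdd
        _ ≤ C * ‖z‖ := mul_le_mul (le_refl C) hwz (norm_nonneg w) hCnn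
    have hkey := (convex_closedBall (0:ℂ) (‖z‖)).norm_image_sub_le_of_norm_hasFDerivWithin_le
      hders hbound (mem_closedBall_self (norm_nonneg z))
      (by rw [mem_closedBall_zero_iff] : z ∈ closedBall (0:ℂ) (‖z‖))
    rw [h0, sub_zero, sub_zero, Real.norm_eq_abs] at hkey
    calc u z ≤ |u z| := le_abs_self _
      _ ≤ C * ‖z‖ * ‖z‖ := hkey
      _ = C * ‖z‖ ^2 := by ring
  -- Step 2 : u z ≤ |z|² on the disc
  have hu2 : ∀ z ∈ ball (0:ℂ) 1, u z ≤ ‖z‖ ^ 2 := by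
    intro z hz
    by_cases hz0 : z = 0
    · simp [hz0, h0]
    have habsz : 0 < ‖z‖ := norm_pos_iff.mpr hz0
    have hz1 : ‖z‖ < 1 := by
      rw [mem_ball_zero_iff] at hz
      exact hz
    -- main estimate for every R and η
    have key : ∀ R : ℝ, ‖z‖ < R → R < 1 → ∀ η : ℝ, 0 < η →
        u z / ‖z‖ ^ 2 ≤ 1/R^2 + η * (Real.log R - Real.log (‖z‖)) := by
      intro R hR1 hR2 η hη
      have hRpos : 0 < R := habsz.trans hR1
      set M : ℝ := 1/R^2 + η * Real.log R with hM
      set δ : ℝ := min (min (δ₀/2) (‖z‖/2)) (Real.exp ((M - C)/η)) with hδdef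
      have hδpos : 0 < δ := by
        apply lt_min (lt_min (by positivity) (by positivity)) (Real.exp_pos _)
      have hδz : δ < ‖z‖ :=
        lt_of_le_of_lt ((min_le_left _ _).trans (min_le_right _ _)) (by linarith)
      have hδδ₀ : δ ≤ δ₀ := (min_le_left _ _).trans ((min_le_left _ _).trans (by linarith))
      have hδexp : δ ≤ Real.exp ((M - C)/η) := min_le_right _ _
      have hδR : δ < R := hδz.trans hR1
      clear_value M δ
      have hw := subharmonic_add_log hsub η
      have hbd : ∀ y : ℂ, (‖y‖ = δ ∨ ‖y‖ = R) →
          u y / ‖y‖ ^ 2 + η * Real.log (‖y‖) ≤ M := by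
        intro y hy
        rcases hy with hy | hy
        · have hylt : ‖y‖ ≤ δ₀ := by rw [hy]; exact hδδ₀
          have h1 : u y ≤ C * ‖y‖^2 := hTaylor y hylt
          have hypos : 0 < ‖y‖ := by rw [hy]; exact hδpos
          have h2 : u y / ‖y‖ ^2 ≤ C := by
            rw [div_le_iff₀ (by positivity)]
            linarith
          have h3 : Real.log (‖y‖) ≤ (M - C)/η := by
            rw [hy]
            rw [Real.log_le_iff_le_exp hδpos]
            exact hδexp
          have h4 : η * Real.log (‖y‖) ≤ M - C := by
            have h5 := mul_le_mul_of_nonneg_left h3 hη.le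
            calc η * Real.log (‖y‖) ≤ η * ((M - C)/η) := h5
              _ = M - C := by field_simp
          linarith
        · have hymem : y ∈ ball (0:ℂ) 1 := by
            rw [mem_ball_zero_iff, hy]; exact hR2
          have h1 : u y ≤ 1 := (hb y hymem).2
          have h2 : u y / R ^2 ≤ 1/R^2 := by
            rw [div_le_div_iff₀ (by positivity) (by positivity)]
            nlinarith [(hb y hymem).1]
          rw [hy, hM]
          linarith
      have := annulus_max hw hδpos hδR hR2 hbd z hδz.le hR1.le
      simp only [hM] at this
      linarith
    -- let η → 0 : v z ≤ 1/R²
    have key2 : ∀ R : ℝ, ‖z‖ < R → R < 1 →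
        u z / ‖z‖ ^ 2 ≤ 1/R^2 := by
      intro R hR1 hR2
      have hlogpos : 0 < Real.log R - Real.log (‖z‖) := by
        have := Real.log_lt_log habsz hR1
        linarith
      refine le_of_forall_pos_le_add fun ε hε => ?_
      have hη : 0 < ε / (Real.log R - Real.log (‖z‖)) := by positivity
      have := key R hR1 hR2 _ hη
      calc u z / ‖z‖ ^ 2
          ≤ 1/R^2 + ε / (Real.log R - Real.log (‖z‖))
            * (Real.log R - Real.log (‖z‖)) := this
        _ = 1/R^2 + ε := by field_simp
    -- let R → 1
    have hlim : Filter.Tendsto (fun R : ℝ => ‖z‖^2 / R^2) (nhdsWithin 1 (Iio 1))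
        (nhds (‖z‖^2)) := by
      have hcont : ContinuousAt (fun R : ℝ => ‖z‖^2 / R^2) 1 := by
        apply ContinuousAt.div continuousAt_const (continuous_pow 2).continuousAt
        norm_num
      have := hcont.tendsto.mono_left
        (nhdsWithin_le_nhds : nhdsWithin (1:ℝ) (Iio 1) ≤ nhds 1)
      simpa using this
    apply ge_of_tendsto hlim
    have hIoo : Ioo (‖z‖) 1 ∈ nhdsWithin (1:ℝ) (Iio 1) :=
      Ioo_mem_nhdsLT_of_mem ⟨hz1, le_refl 1⟩
    filter_upwards [hIoo] with R hR
    have h := key2 R hR.1 hR.2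
    have hRpos : 0 < R := habsz.trans hR.1
    rw [div_le_div_iff₀ (by positivity) (by positivity)] at h
    rw [le_div_iff₀ (by positivity)]
    linarith
  -- Step 3 : conclude via the second derivative test
  have h1 : fderiv ℝ (fun w => fderiv ℝ u w 1) 0 1 ≤ 2 :=
    key_dir hC2 h0 hu2 (by simp)
  have h2 : fderiv ℝ (fun w => fderiv ℝ u w Complex.I) 0 Complex.I ≤ 2 :=
    key_dir hC2 h0 hu2 (by simp)
  rw [mixedDeriv]
  linarith
end
end

section
/- The plurisubharmonic metric is bounded above by the Kobayashi metric: for any domain Ω ⊂ ℂⁿ, P ∈ Ω, ξ ∈ ℂⁿ, F_P^Ω(P, ξ) ≤ F_K^Ω(P, ξ). -/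
open Complex Metric Set Filter Asymptotics

noncomputable section

/-- The plurisubharmonic metric of Section 4: candidates are C² near `P`, vanish at `P`, and
are controlled along an extremal Kobayashi disc. -/
def pshMetric {n : ℕ} (Ω : Set (Fin n → ℂ)) (P ξ : Fin n → ℂ) : ℝ :=
  sSup {x : ℝ | ∃ u : (Fin n → ℂ) → ℝ, ContDiffAt ℝ 2 u P ∧ u P = 0 ∧
    (∃ f : ℂ → (Fin n → ℂ), DifferentiableOn ℂ f (ball 0 1) ∧
      (∀ z ∈ ball (0:ℂ) 1, f z ∈ closure Ω) ∧ f 0 = P ∧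
      fderiv ℂ f 0 1 = (kobayashiMetric Ω P ξ)⁻¹ • ξ ∧
      (∀ z ∈ ball (0:ℂ) 1, 0 ≤ u (f z) ∧ u (f z) ≤ 1) ∧
      SubharmonicOn (fun z => u (f z) / ‖z‖ ^ 2) (ball (0:ℂ) 1 \ {0})) ∧
    x = Real.sqrt (leviForm u P ξ)}

open Topology intervalIntegral

private lemma cd2_data {E : Type*} [NormedAddCommGroup E] [NormedSpace ℝ E]
    {u : E → ℝ} {P : E} (hu : ContDiffAt ℝ 2 u P) :
    ∃ U : Set E, IsOpen U ∧ P ∈ U ∧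
      (∀ z ∈ U, HasFDerivAt u (fderiv ℝ u z) z) ∧
      (∀ z ∈ U, HasFDerivAt (fderiv ℝ u) (fderiv ℝ (fderiv ℝ u) z) z) ∧
      ContinuousOn (fderiv ℝ u) U ∧ ContinuousOn (fderiv ℝ (fderiv ℝ u)) U := by
  obtain ⟨t, htm, ht⟩ := hu.contDiffOn le_rfl (by simp)
  set U := interior t with hU
  have hUo : IsOpen U := isOpen_interior
  have hP : P ∈ U := mem_interior_iff_mem_nhds.2 htm
  have hti : ContDiffOn ℝ 2 u U := ht.mono interior_subset
  have h2 : ContDiffOn ℝ 1 (fderiv ℝ u) U := hti.fderiv_of_isOpen hUo (by norm_num)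
  refine ⟨U, hUo, hP, ?_, ?_, h2.continuousOn, ?_⟩
  · intro z hz
    exact ((hti.differentiableOn (by norm_num)).differentiableAt (hUo.mem_nhds hz)).hasFDerivAt
  · intro z hz
    exact ((h2.differentiableOn one_ne_zero).differentiableAt (hUo.mem_nhds hz)).hasFDerivAt
  · exact h2.continuousOn_fderiv_of_isOpen hUo le_rfl

private lemma ray_hasDerivAt {F : Type*} [NormedAddCommGroup F] [NormedSpace ℝ F]
    {G : ℂ → F} {Φ : ℂ →L[ℝ] F} {d : ℂ} {t : ℝ}
    (h : HasFDerivAt G Φ (t • d)) :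
    HasDerivAt (fun s : ℝ => G (s • d)) (Φ d) t := by
  have hline : HasDerivAt (fun s : ℝ => s • d) d t := by
    simpa using (hasDerivAt_id t).smul_const d
  simpa [Function.comp_def] using h.comp_hasDerivAt t hline

private lemma ray_snd {G : ℂ → ℝ} {d : ℂ} {t : ℝ}
    (h : HasFDerivAt (fderiv ℝ G) (fderiv ℝ (fderiv ℝ G) (t • d)) (t • d)) :
    HasDerivAt (fun s : ℝ => fderiv ℝ G (s • d) d)
      ((fderiv ℝ (fderiv ℝ G) (t • d) d) d) t := by
  have h1 : HasDerivAt (fun s : ℝ => fderiv ℝ G (s • d))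
      (fderiv ℝ (fderiv ℝ G) (t • d) d) t := ray_hasDerivAt h
  have h2 := h1.clm_apply (hasDerivAt_const t d)
  simpa using h2

private lemma mixedDeriv_aux {G : ℂ → ℝ} (hG : ContDiffAt ℝ 2 G 0) (d : ℂ) :
    fderiv ℝ (fun w => fderiv ℝ G w d) 0 d = (fderiv ℝ (fderiv ℝ G) 0 d) d := by
  obtain ⟨U, hUo, hU0, hfd1, hfd2, hc1, hc2⟩ := cd2_data hG
  have h2 := hfd2 0 hU0
  have h3 : HasFDerivAt (fun w => fderiv ℝ G w d)
      ((ContinuousLinearMap.apply ℝ ℝ d).comp (fderiv ℝ (fderiv ℝ G) 0)) 0 :=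
    (ContinuousLinearMap.apply ℝ ℝ d).hasFDerivAt.comp 0 h2
  rw [h3.fderiv]
  rfl

private lemma r2_eq_ray {G : ℂ → ℝ} (hG : ContDiffAt ℝ 2 G 0) (d : ℂ) :
    (fderiv ℝ (fderiv ℝ G) 0 d) d = deriv (deriv (fun t : ℝ => G (t • d))) 0 := by
  obtain ⟨U, hUo, hU0, hfd1, hfd2, hc1, hc2⟩ := cd2_data hG
  have hcont : Continuous fun t : ℝ => t • d := by fun_prop
  have hmem : ∀ᶠ t : ℝ in 𝓝 0, t • d ∈ U := by
    have h0 : ((0:ℝ) • d) ∈ U := by simpa using hU0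
    exact hcont.continuousAt.preimage_mem_nhds (hUo.mem_nhds h0)
  have h1 : deriv (fun t : ℝ => G (t • d)) =ᶠ[𝓝 0] fun t => fderiv ℝ G (t • d) d := by
    filter_upwards [hmem] with t ht
    exact (ray_hasDerivAt (hfd1 _ ht)).deriv
  rw [h1.deriv_eq]
  have h2 : HasDerivAt (fun t : ℝ => fderiv ℝ G (t • d) d)
      ((fderiv ℝ (fderiv ℝ G) ((0:ℝ) • d) d) d) 0 :=
    ray_snd (by simpa using hfd2 0 hU0)
  rw [h2.deriv]
  norm_num

private lemma curve_r2 {n : ℕ} {u : (Fin n → ℂ) → ℝ} {P : Fin n → ℂ} (hu : ContDiffAt ℝ 2 u P)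
    {γ γ' : ℝ → (Fin n → ℂ)} (hγ0 : γ 0 = P)
    (hγ : ∀ᶠ t in 𝓝 (0:ℝ), HasDerivAt γ (γ' t) t) {w : Fin n → ℂ} (hγ' : HasDerivAt γ' w 0) :
    deriv (deriv (fun t => u (γ t))) 0
      = (fderiv ℝ (fderiv ℝ u) P (γ' 0)) (γ' 0) + fderiv ℝ u P w := by
  obtain ⟨U, hUo, hUP, hfd1, hfd2, hc1, hc2⟩ := cd2_data hu
  have hγc : ContinuousAt γ 0 := (hγ.self_of_nhds).continuousAt
  have hmem : ∀ᶠ t in 𝓝 (0:ℝ), γ t ∈ U := by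
    apply hγc.preimage_mem_nhds
    rw [hγ0]
    exact hUo.mem_nhds hUP
  have h1 : deriv (fun t => u (γ t)) =ᶠ[𝓝 0] fun t => fderiv ℝ u (γ t) (γ' t) := by
    filter_upwards [hmem, hγ] with t h1t h2t
    exact ((hfd1 _ h1t).comp_hasDerivAt t h2t).deriv
  rw [h1.deriv_eq]
  have hc : HasDerivAt (fun t => fderiv ℝ u (γ t)) (fderiv ℝ (fderiv ℝ u) P (γ' 0)) 0 := by
    have hfd2' : HasFDerivAt (fderiv ℝ u) (fderiv ℝ (fderiv ℝ u) (γ 0)) (γ 0) := by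
      rw [hγ0]; exact hfd2 P hUP
    have h := hfd2'.comp_hasDerivAt 0 (hγ.self_of_nhds)
    simpa [hγ0, Function.comp_def] using h
  have h2 := hc.clm_apply hγ'
  rw [h2.deriv, hγ0]

private lemma ftc_bounds {h p q : ℝ → ℝ} {δ : ℝ}
    (hp : ∀ t ∈ Icc (0:ℝ) δ, HasDerivAt h (p t) t)
    (hq : ∀ t ∈ Icc (0:ℝ) δ, HasDerivAt p (q t) t)
    (hpc : ContinuousOn p (Icc 0 δ)) (hqc : ContinuousOn q (Icc 0 δ))
    (h0 : h 0 = 0) (p0 : p 0 = 0) {c C : ℝ}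
    (hlo : ∀ t ∈ Icc (0:ℝ) δ, c ≤ q t) (hhi : ∀ t ∈ Icc (0:ℝ) δ, q t ≤ C) :
    ∀ t ∈ Icc (0:ℝ) δ, c * t^2/2 ≤ h t ∧ h t ≤ C * t^2/2 := by
  have hpb : ∀ s ∈ Icc (0:ℝ) δ, c * s ≤ p s ∧ p s ≤ C * s := by
    intro s hs
    have hsub : uIcc (0:ℝ) s ⊆ Icc 0 δ := by
      rw [uIcc_of_le hs.1]
      exact Icc_subset_Icc le_rfl hs.2
    have hsub' : Icc (0:ℝ) s ⊆ Icc 0 δ := Icc_subset_Icc le_rfl hs.2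
    have hint : IntervalIntegrable q MeasureTheory.volume 0 s :=
      (hqc.mono hsub).intervalIntegrable
    have heq : ∫ x in (0:ℝ)..s, q x = p s - p 0 :=
      integral_eq_sub_of_hasDerivAt (fun x hx => hq x (hsub hx)) hint
    constructor
    · have hle : ∫ x in (0:ℝ)..s, (fun _ => c) x ≤ ∫ x in (0:ℝ)..s, q x :=
        integral_mono_on hs.1 intervalIntegrable_const hint (fun x hx => hlo x (hsub' hx))
      rw [heq, p0, sub_zero, integral_const, sub_zero, smul_eq_mul] at hle
      linarith [hle]
    · have hle : ∫ x in (0:ℝ)..s, q x ≤ ∫ x in (0:ℝ)..s, (fun _ => C) x :=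
        integral_mono_on hs.1 hint intervalIntegrable_const (fun x hx => hhi x (hsub' hx))
      rw [heq, p0, sub_zero, integral_const, sub_zero, smul_eq_mul] at hle
      linarith [hle]
  intro t ht
  have hsub : uIcc (0:ℝ) t ⊆ Icc 0 δ := by
    rw [uIcc_of_le ht.1]
    exact Icc_subset_Icc le_rfl ht.2
  have hsub' : Icc (0:ℝ) t ⊆ Icc 0 δ := Icc_subset_Icc le_rfl ht.2
  have hintp : IntervalIntegrable p MeasureTheory.volume 0 t :=
    (hpc.mono hsub).intervalIntegrable
  have heq : ∫ x in (0:ℝ)..t, p x = h t - h 0 :=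
    integral_eq_sub_of_hasDerivAt (fun x hx => hp x (hsub hx)) hintp
  have hcx : IntervalIntegrable (fun x => c * x) MeasureTheory.volume 0 t :=
    (continuous_const.mul continuous_id).intervalIntegrable 0 t
  have hCx : IntervalIntegrable (fun x => C * x) MeasureTheory.volume 0 t :=
    (continuous_const.mul continuous_id).intervalIntegrable 0 t
  constructor
  · have hle : ∫ x in (0:ℝ)..t, c * x ≤ ∫ x in (0:ℝ)..t, p x := by
      apply integral_mono_on ht.1 hcx hintp
      intro x hx
      exact (hpb x (hsub' hx)).1
    rw [heq, h0, sub_zero, integral_const_mul, integral_id] at hle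
    have : c * t^2/2 = c * ((t^2 - 0^2)/2) := by ring
    linarith [hle]
  · have hle : ∫ x in (0:ℝ)..t, p x ≤ ∫ x in (0:ℝ)..t, C * x := by
      apply integral_mono_on ht.1 hintp hCx
      intro x hx
      exact (hpb x (hsub' hx)).2
    rw [heq, h0, sub_zero, integral_const_mul, integral_id] at hle
    have : C * t^2/2 = C * ((t^2 - 0^2)/2) := by ring
    linarith [hle]

private lemma log_circle_mean {z : ℂ} {r : ℝ} (hr : 0 < r) (hrz : r < norm z) :
    ∫ θ in (0:ℝ)..(2*Real.pi),
        Real.log (norm (z + (r : ℂ) * Complex.exp (θ * Complex.I)))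
      = 2 * Real.pi * Real.log (norm z) := by
  have hz0 : z ≠ 0 := by
    intro h
    rw [h] at hrz
    simp at hrz
    linarith
  have habs : (0:ℝ) < norm z := lt_trans hr hrz
  set F : ℂ → ℂ := fun w => Complex.log (w / z) with hF
  -- differentiability on closed ball
  have hFd : ∀ w ∈ closedBall z r, DifferentiableAt ℂ F w := by
    intro w hw
    have hd : norm (w / z - 1) < 1 := by
      have : w / z - 1 = (w - z) / z := by field_simp
      rw [this, norm_div]
      rw [div_lt_one habs]
      calc norm (w - z) ≤ r := by
            rw [← Complex.dist_eq]; exact mem_closedBall.mp hw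
      _ < norm z := hrz
    have hre : (0:ℝ) < (w / z).re := by
      have h1 : |(w / z - 1).re| ≤ norm (w / z - 1) := Complex.abs_re_le_norm _
      have h2 : (w / z).re = 1 + (w / z - 1).re := by simp
      have := abs_le.mp h1
      linarith [this.1]
    have hmem : w / z ∈ Complex.slitPlane := Complex.mem_slitPlane_iff.mpr (Or.inl hre)
    exact (Complex.differentiableAt_log hmem).comp w (differentiableAt_id.div_const z)
  have hdc : DiffContOnCl ℂ F (ball z r) := by
    apply DifferentiableOn.diffContOnCl
    rw [closure_ball z (ne_of_gt hr)]
    exact fun w hw => (hFd w hw).differentiableWithinAt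
  have hcauchy := hdc.circleIntegral_sub_inv_smul (mem_ball_self hr)
  have hFz : F z = 0 := by
    simp [hF, div_self hz0]
  rw [hFz, smul_zero, circleIntegral] at hcauchy
  have hsimp : ∀ θ ∈ uIcc (0:ℝ) (2*Real.pi),
      deriv (circleMap z r) θ • ((circleMap z r θ - z)⁻¹ • F (circleMap z r θ))
        = Complex.I * F (circleMap z r θ) := by
    intro θ _
    rw [deriv_circleMap, circleMap_sub_center]
    have h0 : circleMap 0 r θ ≠ 0 := circleMap_ne_center (ne_of_gt hr)
    rw [smul_eq_mul, smul_eq_mul]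
    field_simp
  rw [integral_congr hsimp, intervalIntegral.integral_const_mul] at hcauchy
  have hintF : ∫ θ in (0:ℝ)..(2*Real.pi), F (circleMap z r θ) = 0 := by
    rcases mul_eq_zero.mp hcauchy with h | h
    · exact absurd h Complex.I_ne_zero
    · exact h
  -- continuity of the circle composition
  have hcc : Continuous fun θ : ℝ => F (circleMap z r θ) := by
    rw [continuous_iff_continuousAt]
    intro θ
    have hm : circleMap z r θ ∈ closedBall z r := by
      simp [Complex.dist_eq, circleMap, mem_closedBall]
      exact (abs_of_pos hr).le
    exact (hFd _ hm).continuousAt.comp (continuous_circleMap z r).continuousAt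
  have hre : (∫ θ in (0:ℝ)..(2*Real.pi), (F (circleMap z r θ)).re) = 0 := by
    have hcomm := Complex.reCLM.intervalIntegral_comp_comm
      (hcc.intervalIntegrable (μ := MeasureTheory.volume) 0 (2*Real.pi))
    rw [hintF] at hcomm
    simpa using hcomm
  have habs0 : ∀ θ : ℝ, (0:ℝ) < norm (circleMap z r θ) := by
    intro θ
    have h1 : norm (z - circleMap z r θ) = r := by
      rw [← Complex.dist_eq, dist_comm]
      exact circleMap_mem_sphere z hr.le θ
    have h2 : norm z - norm (circleMap z r θ)
        ≤ norm (z - circleMap z r θ) := by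
      simpa using norm_sub_norm_le z (circleMap z r θ)
    rw [h1] at h2
    linarith
  have hptw : ∀ θ ∈ uIcc (0:ℝ) (2*Real.pi), (fun θ : ℝ => (F (circleMap z r θ)).re) θ
      = (fun θ : ℝ => Real.log (norm (circleMap z r θ)) - Real.log (norm z)) θ := by
    intro θ _
    simp only [hF]
    rw [Complex.log_re, norm_div, Real.log_div (ne_of_gt (habs0 θ)) (ne_of_gt habs)]
  rw [integral_congr hptw] at hre
  have hac : Continuous fun θ : ℝ => norm (circleMap z r θ) :=
    continuous_norm.comp (continuous_circleMap z r)
  have hlogc : Continuous fun θ : ℝ => Real.log (norm (circleMap z r θ)) := by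
    rw [continuous_iff_continuousAt]
    intro θ
    exact ContinuousAt.comp (x := θ) (Real.continuousAt_log (ne_of_gt (habs0 θ)))
      (g := Real.log) hac.continuousAt
  rw [integral_sub (hlogc.intervalIntegrable _ _) intervalIntegrable_const] at hre
  rw [integral_const, smul_eq_mul, sub_zero] at hre
  have : ∫ θ in (0:ℝ)..(2*Real.pi), Real.log (norm (circleMap z r θ))
      = 2 * Real.pi * Real.log (norm z) := by linarith
  rw [← this]
  apply integral_congr
  intro θ _
  congr 1
private lemma vanish {φ : ℝ → ℝ} (hφ : Continuous φ) (hnn : ∀ θ, 0 ≤ φ θ)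
    (hper : Function.Periodic φ (2*Real.pi))
    (hint : ∫ θ in (0:ℝ)..(2*Real.pi), φ θ = 0) (θ₀ : ℝ) : φ θ₀ = 0 := by
  by_contra hne
  have hpos : 0 < φ θ₀ := (hnn θ₀).lt_of_ne (Ne.symm hne)
  have hshift : ∫ θ in (θ₀ - Real.pi)..(θ₀ + Real.pi), φ θ = 0 := by
    have h1 := hper.intervalIntegral_add_eq (θ₀ - Real.pi) 0
    have h2 : θ₀ - Real.pi + 2*Real.pi = θ₀ + Real.pi := by ring
    rw [h2] at h1
    rw [h1]
    simpa using hint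
  obtain ⟨δ, hδ0, hδ⟩ : ∃ δ > 0, ∀ x : ℝ, |x - θ₀| ≤ δ → φ θ₀/2 ≤ φ x := by
    have hca : ContinuousAt φ θ₀ := hφ.continuousAt
    rw [Metric.continuousAt_iff] at hca
    obtain ⟨δ, hδ0, hd⟩ := hca (φ θ₀/2) (by linarith)
    refine ⟨δ/2, by linarith, fun x hx => ?_⟩
    have hdist : dist x θ₀ < δ := by rw [Real.dist_eq]; linarith
    have := hd hdist
    rw [Real.dist_eq] at this
    have := abs_lt.mp this
    linarith [this.1]
  set δ' := min δ Real.pi with hδ'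
  have hδ'0 : 0 < δ' := lt_min hδ0 Real.pi_pos
  have hδ'π : δ' ≤ Real.pi := min_le_right _ _
  have hδ'δ : δ' ≤ δ := min_le_left _ _
  have hii : ∀ a b : ℝ, IntervalIntegrable φ MeasureTheory.volume a b :=
    fun a b => hφ.intervalIntegrable a b
  have hsplit : ∫ θ in (θ₀ - Real.pi)..(θ₀ + Real.pi), φ θ
      = (∫ θ in (θ₀ - Real.pi)..(θ₀ - δ'), φ θ) + (∫ θ in (θ₀ - δ')..(θ₀ + δ'), φ θ)
        + ∫ θ in (θ₀ + δ')..(θ₀ + Real.pi), φ θ := by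
    rw [integral_add_adjacent_intervals (hii _ _) (hii _ _)]
    rw [integral_add_adjacent_intervals (hii _ _) (hii _ _)]
  have h1 : 0 ≤ ∫ θ in (θ₀ - Real.pi)..(θ₀ - δ'), φ θ :=
    integral_nonneg (by linarith) (fun x _ => hnn x)
  have h3 : 0 ≤ ∫ θ in (θ₀ + δ')..(θ₀ + Real.pi), φ θ :=
    integral_nonneg (by linarith) (fun x _ => hnn x)
  have h2 : δ' * φ θ₀ ≤ ∫ θ in (θ₀ - δ')..(θ₀ + δ'), φ θ := by
    have hmono : ∫ θ in (θ₀ - δ')..(θ₀ + δ'), (fun _ => φ θ₀/2) θ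
        ≤ ∫ θ in (θ₀ - δ')..(θ₀ + δ'), φ θ := by
      apply integral_mono_on (by linarith) intervalIntegrable_const (hii _ _)
      intro x hx
      apply hδ
      rw [abs_le]
      constructor <;> [linarith [hx.1]; linarith [hx.2]]
    rw [integral_const, smul_eq_mul] at hmono
    have : (θ₀ + δ' - (θ₀ - δ')) * (φ θ₀/2) = δ' * φ θ₀ := by ring
    linarith
  have : 0 < ∫ θ in (θ₀ - Real.pi)..(θ₀ + Real.pi), φ θ := by
    rw [hsplit]
    have : 0 < δ' * φ θ₀ := mul_pos hδ'0 hpos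
    linarith
  linarith [hshift]

private lemma annulus_max_s16 {w : ℂ → ℝ} {ρ R : ℝ} (hρ : 0 < ρ) (hρR : ρ < R)
    (hw : ContinuousOn w {z : ℂ | ρ ≤ norm z ∧ norm z ≤ R})
    (hsub : ∀ z : ℂ, ∀ r : ℝ, 0 < r →
      closedBall z r ⊆ {z : ℂ | ρ ≤ norm z ∧ norm z ≤ R} →
      w z ≤ (2*Real.pi)⁻¹ *
        ∫ θ in (0:ℝ)..(2*Real.pi), w (z + (r:ℂ) * Complex.exp (θ * Complex.I))) :
    ∃ z₂, (norm z₂ = ρ ∨ norm z₂ = R) ∧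
      ∀ z, ρ ≤ norm z → norm z ≤ R → w z ≤ w z₂ := by
  set K : Set ℂ := {z : ℂ | ρ ≤ norm z ∧ norm z ≤ R} with hK
  have hKclosed : IsClosed K := by
    apply IsClosed.inter
    · exact isClosed_le continuous_const continuous_norm
    · exact isClosed_le continuous_norm continuous_const
  have hKcomp : IsCompact K := by
    apply (isCompact_closedBall (0:ℂ) R).of_isClosed_subset hKclosed
    intro z hz
    rw [mem_closedBall_zero_iff]
    exact hz.2
  have hKne : K.Nonempty := by
    refine ⟨(R:ℂ), ?_, ?_⟩ <;> simp [Complex.norm_real, abs_of_pos (lt_trans hρ hρR)]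
    · linarith
  obtain ⟨zm, hzmK, hzm⟩ := hKcomp.exists_isMaxOn hKne hw
  set m := w zm with hm
  set A : Set ℂ := {z | z ∈ K ∧ w z = m} with hA
  have hAsub : A ⊆ K := fun z hz => hz.1
  have hAclosed : IsClosed A := by
    rw [← closure_eq_iff_isClosed]
    apply Subset.antisymm _ subset_closure
    intro x hx
    have hxK : x ∈ K := hKclosed.closure_subset (closure_mono hAsub hx)
    have hNB : (𝓝[A] x).NeBot := mem_closure_iff_nhdsWithin_neBot.mp hx
    have h1 : Tendsto w (𝓝[A] x) (𝓝 (w x)) := (hw x hxK).mono hAsub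
    have h2 : Tendsto w (𝓝[A] x) (𝓝 m) := by
      apply Tendsto.congr' _ tendsto_const_nhds
      filter_upwards [eventually_mem_nhdsWithin] with y hy
      exact hy.2.symm
    exact ⟨hxK, tendsto_nhds_unique h1 h2⟩
  have hAcomp : IsCompact A := hKcomp.of_isClosed_subset hAclosed hAsub
  have hAne : A.Nonempty := ⟨zm, hzmK, rfl⟩
  obtain ⟨z₁, hz₁A, hz₁max⟩ := hAcomp.exists_isMaxOn hAne continuous_norm.continuousOn
  set a := norm z₁ with ha
  have haK : ρ ≤ a ∧ a ≤ R := hz₁A.1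
  by_cases hcase : a = ρ ∨ a = R
  · refine ⟨z₁, hcase, fun z h1 h2 => ?_⟩
    rw [hz₁A.2]
    exact hzm ⟨h1, h2⟩
  · exfalso
    push_neg at hcase
    have haρ : ρ < a := lt_of_le_of_ne haK.1 (Ne.symm hcase.1)
    have haR : a < R := lt_of_le_of_ne haK.2 hcase.2
    set r := min ((R - a)/2) ((a - ρ)/2) with hr
    have hr0 : 0 < r := lt_min (by linarith) (by linarith)
    have hr1 : r ≤ (R - a)/2 := min_le_left _ _
    have hr2 : r ≤ (a - ρ)/2 := min_le_right _ _
    have hball : closedBall z₁ r ⊆ K := by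
      intro y hy
      have hd : norm (y - z₁) ≤ r := by
        rw [← Complex.dist_eq]
        exact mem_closedBall.mp hy
      have habs : |norm y - norm z₁| ≤ norm (y - z₁) := by
        simpa using abs_norm_sub_norm_le y z₁
      have := abs_le.mp habs
      constructor
      · simp only [hK, mem_setOf_eq] at *
        linarith [this.1]
      · simp only [hK, mem_setOf_eq] at *
        linarith [this.2]
    -- the circle function
    have hz₁m : w z₁ = m := hz₁A.2
    have hmem : ∀ θ : ℝ, z₁ + (r:ℂ) * Complex.exp (θ * Complex.I) ∈ closedBall z₁ r := by
      intro θ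
      rw [mem_closedBall, Complex.dist_eq]
      have he : z₁ + (r:ℂ) * Complex.exp (θ * Complex.I) - z₁
          = (r:ℂ) * Complex.exp (θ * Complex.I) := by ring
      rw [he, norm_mul, Complex.norm_exp_ofReal_mul_I, mul_one, Complex.norm_real, Real.norm_eq_abs]
      exact (abs_of_pos hr0).le
    have hccirc : Continuous fun θ : ℝ => z₁ + (r:ℂ) * Complex.exp (θ * Complex.I) := by
      fun_prop
    have hwcont : Continuous fun θ : ℝ => w (z₁ + (r:ℂ) * Complex.exp (θ * Complex.I)) :=
      hw.comp_continuous hccirc (fun θ => hball (hmem θ))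
    have hwle : ∀ θ : ℝ, w (z₁ + (r:ℂ) * Complex.exp (θ * Complex.I)) ≤ m :=
      fun θ => hzm (hball (hmem θ))
    set φ : ℝ → ℝ := fun θ => m - w (z₁ + (r:ℂ) * Complex.exp (θ * Complex.I)) with hφ
    have hφc : Continuous φ := continuous_const.sub hwcont
    have hφnn : ∀ θ, 0 ≤ φ θ := fun θ => sub_nonneg.mpr (hwle θ)
    have hφper : Function.Periodic φ (2*Real.pi) := by
      intro θ
      simp only [hφ]
      congr 2
      push_cast
      rw [add_mul, Complex.exp_add]
      simp [Complex.exp_two_pi_mul_I]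
    have hπ : (0:ℝ) < 2*Real.pi := by positivity
    have hintφ : ∫ θ in (0:ℝ)..(2*Real.pi), φ θ = 0 := by
      have h1 := hsub z₁ r hr0 hball
      rw [hz₁m] at h1
      have hIw : IntervalIntegrable
          (fun θ => w (z₁ + (r:ℂ) * Complex.exp (θ * Complex.I)))
          MeasureTheory.volume 0 (2*Real.pi) := hwcont.intervalIntegrable _ _
      have h2 : ∫ θ in (0:ℝ)..(2*Real.pi), w (z₁ + (r:ℂ) * Complex.exp (θ * Complex.I))
          ≤ 2*Real.pi*m := by
        have := integral_mono_on hπ.le hIw intervalIntegrable_const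
          (fun θ _ => hwle θ)
        rw [integral_const, smul_eq_mul, sub_zero] at this
        linarith
      have h3 : 2*Real.pi*m ≤ ∫ θ in (0:ℝ)..(2*Real.pi),
          w (z₁ + (r:ℂ) * Complex.exp (θ * Complex.I)) := by
        rw [inv_mul_eq_div, le_div_iff₀ hπ] at h1
        linarith
      rw [hφ]
      rw [integral_sub intervalIntegrable_const hIw, integral_const, smul_eq_mul, sub_zero]
      linarith
    have hvan := vanish hφc hφnn hφper hintφ (Complex.arg z₁)
    -- the outward point
    have hz₁0 : z₁ ≠ 0 := by
      intro h
      rw [h] at ha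
      simp at ha
      linarith [haρ, ha]
    set y₀ := z₁ + (r:ℂ) * Complex.exp (Complex.arg z₁ * Complex.I) with hy₀
    have hwy₀ : w y₀ = m := by
      have : φ (Complex.arg z₁) = 0 := hvan
      simp only [hφ] at this
      linarith [this]
    have hpos : (0:ℝ) < norm z₁ := norm_pos_iff.mpr hz₁0
    have hay₀ : norm y₀ = a + r := by
      have hexp : (norm z₁ : ℂ) * Complex.exp (z₁.arg * Complex.I) = z₁ :=
        Complex.norm_mul_exp_arg_mul_I z₁
      have h1 : y₀ * (norm z₁ : ℂ) = z₁ * ((norm z₁ + r : ℝ) : ℂ) := by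
        rw [hy₀]
        push_cast
        linear_combination (r:ℂ) * hexp
      have h2 := congrArg norm h1
      rw [norm_mul, norm_mul, Complex.norm_real, Real.norm_eq_abs, Complex.norm_real, Real.norm_eq_abs] at h2
      rw [abs_of_pos hpos, abs_of_pos (by linarith : (0:ℝ) < norm z₁ + r)] at h2
      have h3 : norm y₀ = norm z₁ + r :=
        mul_right_cancel₀ (ne_of_gt hpos)
          (by linarith [h2] :
            norm y₀ * norm z₁ = (norm z₁ + r) * norm z₁)
      rw [ha]
      exact h3
    have hy₀A : y₀ ∈ A := by
      refine ⟨hball ?_, hwy₀⟩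
      rw [mem_closedBall, Complex.dist_eq]
      have he : y₀ - z₁ = (r:ℂ) * Complex.exp (Complex.arg z₁ * Complex.I) := by
        rw [hy₀]; ring
      rw [he, norm_mul, Complex.norm_exp_ofReal_mul_I, mul_one, Complex.norm_real, Real.norm_eq_abs]
      exact (abs_of_pos hr0).le
    have hfin : norm y₀ ≤ norm z₁ := hz₁max hy₀A
    rw [hay₀, ← ha] at hfin
    linarith

private lemma oneVar {g : ℂ → ℝ} (hg : ContDiffAt ℝ 2 g 0) (hg0 : g 0 = 0)
    (hb : ∀ z ∈ ball (0:ℂ) 1, 0 ≤ g z ∧ g z ≤ 1)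
    (hsh : SubharmonicOn (fun z => g z / norm z ^ 2) (ball (0:ℂ) 1 \ {0}))
    {d : ℂ} (hd : norm d = 1) {R : ℝ} (hR0 : 0 < R) (hR1 : R < 1) :
    (fderiv ℝ (fderiv ℝ g) 0 d) d ≤ 2 / R^2 := by
  obtain ⟨U₀, hU₀o, hU₀0, hfd1₀, hfd2₀, hc1₀, hc2₀⟩ := cd2_data hg
  set U : Set ℂ := U₀ ∩ ball 0 1 with hUdef
  have hUo : IsOpen U := hU₀o.inter isOpen_ball
  have hU0 : (0:ℂ) ∈ U := ⟨hU₀0, by simp⟩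
  have hUsub : U ⊆ U₀ := inter_subset_left
  have hfd1 : ∀ z ∈ U, HasFDerivAt g (fderiv ℝ g z) z := fun z hz => hfd1₀ z (hUsub hz)
  have hfd2 : ∀ z ∈ U, HasFDerivAt (fderiv ℝ g) (fderiv ℝ (fderiv ℝ g) z) z :=
    fun z hz => hfd2₀ z (hUsub hz)
  have hc1 : ContinuousOn (fderiv ℝ g) U := hc1₀.mono hUsub
  have hc2 : ContinuousOn (fderiv ℝ (fderiv ℝ g)) U := hc2₀.mono hUsub
  -- gradient vanishes
  have hDg0 : fderiv ℝ g 0 = 0 := by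
    apply IsLocalMin.fderiv_eq_zero
    filter_upwards [ball_mem_nhds (0:ℂ) one_pos] with z hz
    rw [hg0]
    exact (hb z hz).1
  -- small closed ball inside U
  obtain ⟨δ, hδ0, hδU⟩ : ∃ δ > 0, closedBall (0:ℂ) δ ⊆ U := by
    rcases (Metric.nhds_basis_closedBall.mem_iff).mp (hUo.mem_nhds hU0) with ⟨δ, h1, h2⟩
    exact ⟨δ, h1, h2⟩
  -- bound on the second derivative
  obtain ⟨M, hM⟩ := (isCompact_closedBall (0:ℂ) δ).exists_bound_of_continuousOn
    (f := fderiv ℝ (fderiv ℝ g)) (hc2.mono hδU)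
  have hM0 : 0 ≤ M := le_trans (norm_nonneg _) (hM 0 (mem_closedBall_self hδ0.le))
  -- uniform ray facts
  have hmem_ray : ∀ (e : ℂ), norm e = 1 → ∀ t : ℝ, t ∈ Icc 0 δ →
      t • e ∈ closedBall (0:ℂ) δ := by
    intro e he t ht
    rw [mem_closedBall_zero_iff, norm_smul, he, mul_one,
      Real.norm_eq_abs, _root_.abs_of_nonneg ht.1]
    exact ht.2
  have hp' : ∀ (e : ℂ), norm e = 1 → ∀ t ∈ Icc (0:ℝ) δ,
      HasDerivAt (fun s : ℝ => g (s • e)) (fderiv ℝ g (t • e) e) t := by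
    intro e he t ht
    exact ray_hasDerivAt (hfd1 _ (hδU (hmem_ray e he t ht)))
  have hq' : ∀ (e : ℂ), norm e = 1 → ∀ t ∈ Icc (0:ℝ) δ,
      HasDerivAt (fun s : ℝ => fderiv ℝ g (s • e) e)
        ((fderiv ℝ (fderiv ℝ g) (t • e) e) e) t := by
    intro e he t ht
    exact ray_snd (hfd2 _ (hδU (hmem_ray e he t ht)))
  have hraycont : ∀ (e : ℂ), ContinuousOn (fun t : ℝ => t • e) (Icc 0 δ) := by
    intro e
    fun_prop
  have hpc' : ∀ (e : ℂ), norm e = 1 →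
      ContinuousOn (fun t : ℝ => fderiv ℝ g (t • e) e) (Icc 0 δ) := by
    intro e he
    have h1 : ContinuousOn (fun t : ℝ => fderiv ℝ g (t • e)) (Icc 0 δ) :=
      hc1.comp (hraycont e) (fun t ht => hδU (hmem_ray e he t ht))
    exact (ContinuousLinearMap.apply ℝ ℝ e).continuous.comp_continuousOn h1
  have hqc' : ∀ (e : ℂ), norm e = 1 →
      ContinuousOn (fun t : ℝ => (fderiv ℝ (fderiv ℝ g) (t • e) e) e) (Icc 0 δ) := by
    intro e he
    have h1 : ContinuousOn (fun t : ℝ => fderiv ℝ (fderiv ℝ g) (t • e)) (Icc 0 δ) :=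
      hc2.comp (hraycont e) (fun t ht => hδU (hmem_ray e he t ht))
    exact ((ContinuousLinearMap.apply ℝ ℝ e).continuous.comp
      ((ContinuousLinearMap.apply ℝ (ℂ →L[ℝ] ℝ) e).continuous)).comp_continuousOn h1
  have hqbound : ∀ (e : ℂ), norm e = 1 → ∀ t ∈ Icc (0:ℝ) δ,
      |(fderiv ℝ (fderiv ℝ g) (t • e) e) e| ≤ M := by
    intro e he t ht
    have h1 : ‖(fderiv ℝ (fderiv ℝ g) (t • e) e) e‖
        ≤ ‖fderiv ℝ (fderiv ℝ g) (t • e)‖ * ‖e‖ * ‖e‖ := by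
      calc ‖(fderiv ℝ (fderiv ℝ g) (t • e) e) e‖
          ≤ ‖fderiv ℝ (fderiv ℝ g) (t • e) e‖ * ‖e‖ :=
            ContinuousLinearMap.le_opNorm _ e
      _ ≤ ‖fderiv ℝ (fderiv ℝ g) (t • e)‖ * ‖e‖ * ‖e‖ := by
            apply mul_le_mul_of_nonneg_right _ (norm_nonneg e)
            exact ContinuousLinearMap.le_opNorm _ e
    rw [he, mul_one, mul_one] at h1
    rw [← Real.norm_eq_abs]
    exact le_trans h1 (hM _ (hmem_ray e he t ht))
  have hg_smul : ∀ (e : ℂ), norm e = 1 → ∀ t ∈ Icc (0:ℝ) δ,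
      g (t • e) ≤ M * t^2/2 := by
    intro e he t ht
    have h0' : g ((0:ℝ) • e) = 0 := by rw [zero_smul]; exact hg0
    have p0' : fderiv ℝ g ((0:ℝ) • e) e = 0 := by rw [zero_smul, hDg0]; rfl
    have := ftc_bounds (hp' e he) (hq' e he) (hpc' e he) (hqc' e he) h0' p0'
      (c := -M) (C := M)
      (fun t ht => (abs_le.mp (hqbound e he t ht)).1)
      (fun t ht => (abs_le.mp (hqbound e he t ht)).2) t ht
    exact this.2
  -- bound g near 0
  have hB1 : ∀ z : ℂ, norm z ≤ δ → g z ≤ M/2 * norm z^2 := by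
    intro z hz
    rcases eq_or_ne z 0 with rfl | hz0
    · simp [hg0]
    · have haz : 0 < norm z := norm_pos_iff.mpr hz0
      set e : ℂ := (norm z)⁻¹ • z with he_def
      have he : norm e = 1 := by
        rw [he_def]
        rw [show ((norm z)⁻¹ • z) = ((norm z)⁻¹ : ℝ) • z from rfl]
        rw [norm_smul, Real.norm_eq_abs, abs_of_pos (by positivity)]
        field_simp
      have hze : (norm z) • e = z := by
        rw [he_def, smul_smul]
        rw [mul_inv_cancel₀ (ne_of_gt haz), one_smul]
      have := hg_smul e he (norm z) ⟨haz.le, hz⟩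
      rw [hze] at this
      calc g z ≤ M * norm z^2/2 := this
      _ = M/2 * norm z^2 := by ring
  -- subharmonic data
  obtain ⟨hvc, hvsub⟩ := hsh
  have hKsub : ∀ {ρ' : ℝ}, 0 < ρ' →
      {y : ℂ | ρ' ≤ norm y ∧ norm y ≤ R} ⊆ ball (0:ℂ) 1 \ {0} := by
    intro ρ' hρ' y hy
    constructor
    · rw [mem_ball_zero_iff]
      exact lt_of_le_of_lt hy.2 hR1
    · simp only [mem_singleton_iff]
      intro h
      rw [h] at hy
      simp at hy
      linarith [hy.1]
  -- claim1 : interior bound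
  have claim1 : ∀ z₀ : ℂ, z₀ ≠ 0 → norm z₀ < R →
      g z₀ / norm z₀^2 ≤ 1 / R^2 := by
    intro z₀ hz₀0 hz₀R
    set a₀ := norm z₀ with ha₀def
    have ha₀ : 0 < a₀ := norm_pos_iff.mpr hz₀0
    have hlog : Real.log a₀ < 0 := Real.log_neg ha₀ (lt_trans hz₀R hR1)
    apply le_of_forall_pos_le_add
    intro ε' hε'
    set ε := ε' / (-Real.log a₀) with hεdef
    have hε : 0 < ε := div_pos hε' (by linarith)
    have hkey : g z₀/a₀^2 + ε * Real.log a₀ ≤ 1/R^2 := by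
      set v : ℂ → ℝ := fun z => g z / norm z^2 with hv
      set wε : ℂ → ℝ := fun z => v z + ε * Real.log (norm z) with hwε
      set ρ := min (min δ (a₀/2))
        (Real.exp ((g z₀/a₀^2 + ε * Real.log a₀ - M/2 - 1)/ε)) with hρdef
      have hρ0 : 0 < ρ := by
        apply lt_min (lt_min hδ0 (by linarith))
        exact Real.exp_pos _
      have hρδ : ρ ≤ δ := le_trans (min_le_left _ _) (min_le_left _ _)
      have hρa : ρ < a₀ := by
        have : ρ ≤ a₀/2 := le_trans (min_le_left _ _) (min_le_right _ _)
        linarith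
      have hρR : ρ < R := lt_trans hρa hz₀R
      have hwsub : ∀ z : ℂ, ∀ r : ℝ, 0 < r →
          closedBall z r ⊆ {y : ℂ | ρ ≤ norm y ∧ norm y ≤ R} →
          wε z ≤ (2*Real.pi)⁻¹ *
            ∫ θ in (0:ℝ)..(2*Real.pi), wε (z + (r:ℂ) * Complex.exp (θ * Complex.I)) := by
        intro z r hr hsubK
        have hKb := hKsub hρ0
        have h1 := hvsub z r hr (hsubK.trans hKb)
        have hz0' : z ∉ ({0}:Set ℂ) := ((hKb (hsubK (mem_closedBall_self hr.le))).2)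
        have hrz : r < norm z := by
          by_contra hcon
          push_neg at hcon
          have h0m : (0:ℂ) ∈ closedBall z r := by
            rw [mem_closedBall, dist_comm, Complex.dist_eq, sub_zero]
            exact hcon
          have := (hsubK h0m).1
          simp at this
          linarith
        have h2 := log_circle_mean hr hrz
        have hπ : (0:ℝ) < 2*Real.pi := by positivity
        have hcc : Continuous fun θ : ℝ => z + (r:ℂ) * Complex.exp (θ * Complex.I) := by
          fun_prop
        have hmemθ : ∀ θ : ℝ, z + (r:ℂ) * Complex.exp (θ * Complex.I) ∈ closedBall z r := by
          intro θ
          rw [mem_closedBall, Complex.dist_eq]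
          have he : z + (r:ℂ) * Complex.exp (θ * Complex.I) - z
              = (r:ℂ) * Complex.exp (θ * Complex.I) := by ring
          rw [he, norm_mul, Complex.norm_exp_ofReal_mul_I, mul_one, Complex.norm_real, Real.norm_eq_abs]
          exact (abs_of_pos hr).le
        have hvcc : Continuous fun θ : ℝ => v (z + (r:ℂ) * Complex.exp (θ * Complex.I)) :=
          hvc.comp_continuous hcc (fun θ => hKb (hsubK (hmemθ θ)))
        have habsθ : ∀ θ : ℝ, (0:ℝ) < norm (z + (r:ℂ) * Complex.exp (θ * Complex.I)) :=
          fun θ => lt_of_lt_of_le hρ0 ((hsubK (hmemθ θ)).1)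
        have hlogcc : Continuous fun θ : ℝ =>
            Real.log (norm (z + (r:ℂ) * Complex.exp (θ * Complex.I))) := by
          rw [continuous_iff_continuousAt]
          intro θ
          exact ContinuousAt.comp (x := θ) (Real.continuousAt_log (ne_of_gt (habsθ θ)))
            ((continuous_norm.comp hcc).continuousAt)
        have hIv : IntervalIntegrable
            (fun θ => v (z + (r:ℂ) * Complex.exp (θ * Complex.I)))
            MeasureTheory.volume 0 (2*Real.pi) := hvcc.intervalIntegrable _ _
        have hIl : IntervalIntegrable
            (fun θ => Real.log (norm (z + (r:ℂ) * Complex.exp (θ * Complex.I))))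
            MeasureTheory.volume 0 (2*Real.pi) := hlogcc.intervalIntegrable _ _
        have hsum : ∫ θ in (0:ℝ)..(2*Real.pi), wε (z + (r:ℂ) * Complex.exp (θ * Complex.I))
            = (∫ θ in (0:ℝ)..(2*Real.pi), v (z + (r:ℂ) * Complex.exp (θ * Complex.I)))
              + ε * (2 * Real.pi * Real.log (norm z)) := by
          rw [← h2, ← intervalIntegral.integral_const_mul]
          rw [← integral_add hIv (hIl.const_mul ε)]
        rw [hsum]
        rw [mul_add, mul_comm ((2*Real.pi)⁻¹) (ε * (2 * Real.pi * Real.log (norm z)))]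
        have hc2π : ε * (2 * Real.pi * Real.log (norm z)) * (2*Real.pi)⁻¹
            = ε * Real.log (norm z) := by
          field_simp
        rw [hc2π]
        exact add_le_add h1 (le_refl _)
      have hwc : ContinuousOn wε {y : ℂ | ρ ≤ norm y ∧ norm y ≤ R} := by
        apply ContinuousOn.add
        · exact hvc.mono (hKsub hρ0)
        · apply ContinuousOn.mul continuousOn_const
          intro y hy
          have : (0:ℝ) < norm y := lt_of_lt_of_le hρ0 hy.1
          exact (ContinuousAt.comp (Real.continuousAt_log (ne_of_gt this))
            continuous_norm.continuousAt).continuousWithinAt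
      obtain ⟨z₂, hz₂ρR, hz₂max⟩ := annulus_max_s16 hρ0 hρR hwc hwsub
      have hz₀K : ρ ≤ a₀ ∧ a₀ ≤ R := ⟨hρa.le, hz₀R.le⟩
      have hwz₀ : wε z₀ ≤ wε z₂ := hz₂max z₀ hz₀K.1 hz₀K.2
      rcases hz₂ρR with h2ρ | h2R
      · exfalso
        have hb1 : g z₂ ≤ M/2 * ρ^2 := by
          have := hB1 z₂ (by rw [h2ρ]; exact hρδ)
          rw [h2ρ] at this
          exact this
        have hwz₂ : wε z₂ ≤ M/2 + ε * Real.log ρ := by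
          simp only [hwε, hv, h2ρ]
          have hρ2 : (0:ℝ) < ρ^2 := by positivity
          have : g z₂ / ρ^2 ≤ M/2 := by
            rw [div_le_iff₀ hρ2]
            calc g z₂ ≤ M/2 * ρ^2 := hb1
            _ = M/2 * ρ^2 := rfl
          linarith
        have hρexp : ρ ≤ Real.exp ((g z₀/a₀^2 + ε * Real.log a₀ - M/2 - 1)/ε) :=
          min_le_right _ _
        have hlogρ : Real.log ρ ≤ (g z₀/a₀^2 + ε * Real.log a₀ - M/2 - 1)/ε := by
          rw [Real.log_le_iff_le_exp hρ0]
          exact hρexp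
        have hεlogρ : ε * Real.log ρ ≤ g z₀/a₀^2 + ε * Real.log a₀ - M/2 - 1 := by
          have := mul_le_mul_of_nonneg_left hlogρ hε.le
          rw [mul_div_cancel₀ _ (ne_of_gt hε)] at this
          linarith
        have hwz₀eq : wε z₀ = g z₀/a₀^2 + ε * Real.log a₀ := by
          simp only [hwε, hv, ha₀def]
        rw [hwz₀eq] at hwz₀
        linarith
      · have hz₂ball : z₂ ∈ ball (0:ℂ) 1 := by
          rw [mem_ball_zero_iff, h2R]
          exact hR1
        have hgz₂ : g z₂ ≤ 1 := (hb z₂ hz₂ball).2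
        have hwz₂ : wε z₂ ≤ 1/R^2 := by
          simp only [hwε, hv, h2R]
          have hR2 : (0:ℝ) < R^2 := by positivity
          have h1 : g z₂ / R^2 ≤ 1/R^2 := by
            gcongr
          have h2 : ε * Real.log R ≤ 0 :=
            mul_nonpos_of_nonneg_of_nonpos hε.le (Real.log_nonpos hR0.le hR1.le)
          linarith
        have hwz₀eq : wε z₀ = g z₀/a₀^2 + ε * Real.log a₀ := by
          simp only [hwε, hv, ha₀def]
        rw [hwz₀eq] at hwz₀
        linarith
    -- conclude from hkey
    have hlne : Real.log a₀ ≠ 0 := ne_of_lt hlog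
    have hεlog : ε * Real.log a₀ = -ε' := by
      rw [hεdef, div_mul_eq_mul_div, div_neg, mul_div_assoc, div_self hlne, mul_one]
    linarith [hkey, hεlog]
  -- final step
  apply le_of_forall_pos_le_add
  intro ε hε
  set q : ℝ → ℝ := fun t => (fderiv ℝ (fderiv ℝ g) (t • d) d) d with hqdef
  have hqcont : ContinuousAt q 0 := by
    have hop : IsOpen {s : ℝ | s • d ∈ U} :=
      (by fun_prop : Continuous fun s : ℝ => s • d).isOpen_preimage U hUo
    have h0m : (0:ℝ) ∈ {s : ℝ | s • d ∈ U} := by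
      simp only [mem_setOf_eq, zero_smul]
      exact hU0
    have hco : ContinuousOn q {s : ℝ | s • d ∈ U} := by
      have h1 : ContinuousOn (fun t : ℝ => fderiv ℝ (fderiv ℝ g) (t • d))
          {s : ℝ | s • d ∈ U} := hc2.comp (by fun_prop) (fun t ht => ht)
      exact ((ContinuousLinearMap.apply ℝ ℝ d).continuous.comp
        ((ContinuousLinearMap.apply ℝ (ℂ →L[ℝ] ℝ) d).continuous)).comp_continuousOn h1
    exact hco.continuousAt (hop.mem_nhds h0m)
  obtain ⟨δ₂, hδ₂0, hδ₂δ, hδ₂R, hδ₂q⟩ : ∃ δ₂ > 0, δ₂ ≤ δ ∧ δ₂ < R ∧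
      ∀ t : ℝ, |t| ≤ δ₂ → q 0 - ε ≤ q t := by
    rw [Metric.continuousAt_iff] at hqcont
    obtain ⟨δ₁, hδ₁0, hδ₁⟩ := hqcont ε hε
    refine ⟨min (min δ (R/2)) (δ₁/2), by positivity, ?_, ?_, ?_⟩
    · exact le_trans (min_le_left _ _) (min_le_left _ _)
    · calc min (min δ (R/2)) (δ₁/2) ≤ R/2 := le_trans (min_le_left _ _) (min_le_right _ _)
      _ < R := by linarith
    · intro t ht
      have htδ₁ : dist t 0 < δ₁ := by
        rw [Real.dist_eq, sub_zero]
        calc |t| ≤ min (min δ (R/2)) (δ₁/2) := ht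
        _ ≤ δ₁/2 := min_le_right _ _
        _ < δ₁ := by linarith
      have := hδ₁ htδ₁
      rw [Real.dist_eq] at this
      have := abs_lt.mp this
      linarith [this.1]
  -- apply ftc lower bound on [0, δ₂]
  have hsub2 : Icc (0:ℝ) δ₂ ⊆ Icc 0 δ := Icc_subset_Icc le_rfl hδ₂δ
  have h0' : g ((0:ℝ) • d) = 0 := by rw [zero_smul]; exact hg0
  have p0' : fderiv ℝ g ((0:ℝ) • d) d = 0 := by rw [zero_smul, hDg0]; rfl
  have hftc := ftc_bounds (δ := δ₂)
    (fun t ht => hp' d hd t (hsub2 ht)) (fun t ht => hq' d hd t (hsub2 ht))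
    ((hpc' d hd).mono hsub2) ((hqc' d hd).mono hsub2) h0' p0'
    (c := q 0 - ε) (C := M)
    (fun t ht => hδ₂q t (by rw [_root_.abs_of_nonneg ht.1]; exact ht.2))
    (fun t ht => (abs_le.mp (hqbound d hd t (hsub2 ht))).2)
  have hlow := (hftc δ₂ ⟨hδ₂0.le, le_rfl⟩).1
  -- upper bound from claim1
  have habsδ₂ : norm ((δ₂:ℝ) • d) = δ₂ := by
    rw [norm_smul, Real.norm_eq_abs, abs_of_pos hδ₂0,
      hd, mul_one]
  have hne : ((δ₂:ℝ) • d) ≠ 0 := by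
    intro h
    rw [h] at habsδ₂
    simp at habsδ₂
    linarith
  have hcl := claim1 ((δ₂:ℝ) • d) hne (by rw [habsδ₂]; exact hδ₂R)
  rw [habsδ₂] at hcl
  have hδ₂2 : (0:ℝ) < δ₂^2 := by positivity
  have hup : g ((δ₂:ℝ) • d) ≤ δ₂^2 / R^2 := by
    rw [div_le_iff₀ hδ₂2] at hcl
    calc g ((δ₂:ℝ) • d) ≤ 1/R^2 * δ₂^2 := hcl
    _ = δ₂^2/R^2 := by ring
  -- combine
  have hq0 : q 0 = (fderiv ℝ (fderiv ℝ g) 0 d) d := by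
    simp only [hqdef, zero_smul]
  have hcomb : (q 0 - ε) * δ₂^2/2 ≤ δ₂^2/R^2 := le_trans hlow hup
  have h3 : δ₂^2/R^2 = (2/R^2) * (δ₂^2/2) := by ring
  have h4 : (q 0 - ε) * (δ₂^2/2) ≤ (2/R^2) * (δ₂^2/2) := by
    rw [← h3]
    calc (q 0 - ε) * (δ₂^2/2) = (q 0 - ε) * δ₂^2/2 := by ring
    _ ≤ δ₂^2/R^2 := hcomb
  have h5 : q 0 - ε ≤ 2/R^2 :=
    le_of_mul_le_mul_right (by linarith [h4]) (by positivity : (0:ℝ) < δ₂^2/2)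
  rw [hq0] at h5
  linarith

/-- mixedDeriv via the bilinear second derivative -/
private lemma mixedDeriv_eq {G : ℂ → ℝ} (hG : ContDiffAt ℝ 2 G 0) :
    mixedDeriv G 0 = (1/4) * ((fderiv ℝ (fderiv ℝ G) 0 1) 1
      + (fderiv ℝ (fderiv ℝ G) 0 Complex.I) Complex.I) := by
  rw [mixedDeriv, mixedDeriv_aux hG 1, mixedDeriv_aux hG Complex.I]

private lemma mixedDeriv_quad (C : ℝ) :
    mixedDeriv (fun t : ℂ => C * (t.re^2 + t.im^2)) 0 = C := by
  have hfd : ∀ w : ℂ, HasFDerivAt (fun t : ℂ => C * (t.re^2 + t.im^2))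
      ((2*C*w.re) • (Complex.reCLM : ℂ →L[ℝ] ℝ) + (2*C*w.im) • (Complex.imCLM : ℂ →L[ℝ] ℝ)) w := by
    intro w
    have hre : HasFDerivAt (fun t : ℂ => t.re) (Complex.reCLM : ℂ →L[ℝ] ℝ) w :=
      Complex.reCLM.hasFDerivAt
    have him : HasFDerivAt (fun t : ℂ => t.im) (Complex.imCLM : ℂ →L[ℝ] ℝ) w :=
      Complex.imCLM.hasFDerivAt
    have heq : (fun t : ℂ => C * (t.re^2 + t.im^2))
        = fun t : ℂ => C * (t.re*t.re + t.im*t.im) := by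
      funext t; ring
    rw [heq]
    have h1 := ((hre.mul hre).add (him.mul him)).const_mul C
    refine h1.congr_fderiv ?_
    ext v
    simp [Complex.reCLM_apply, Complex.imCLM_apply]
    ring
  have hd1 : (fun w : ℂ => fderiv ℝ (fun t : ℂ => C * (t.re^2 + t.im^2)) w 1)
      = fun w : ℂ => 2*C*w.re := by
    funext w
    rw [(hfd w).fderiv]
    simp
  have hdI : (fun w : ℂ => fderiv ℝ (fun t : ℂ => C * (t.re^2 + t.im^2)) w Complex.I)
      = fun w : ℂ => 2*C*w.im := by
    funext w
    rw [(hfd w).fderiv]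
    simp
  rw [mixedDeriv, hd1, hdI]
  have h1 : HasFDerivAt (fun w : ℂ => 2*C*w.re) ((2*C) • (Complex.reCLM : ℂ →L[ℝ] ℝ)) 0 := by
    have := (Complex.reCLM.hasFDerivAt (x := (0:ℂ))).const_mul (2*C)
    exact this
  have h2 : HasFDerivAt (fun w : ℂ => 2*C*w.im) ((2*C) • (Complex.imCLM : ℂ →L[ℝ] ℝ)) 0 := by
    have := (Complex.imCLM.hasFDerivAt (x := (0:ℂ))).const_mul (2*C)
    exact this
  rw [h1.fderiv, h2.fderiv]
  simp
  ring

private lemma key {n : ℕ} (Ω : Set (Fin n → ℂ)) (P ξ : Fin n → ℂ)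
    (hk : 0 < kobayashiMetric Ω P ξ)
    (u : (Fin n → ℂ) → ℝ) (f : ℂ → (Fin n → ℂ))
    (hu : ContDiffAt ℝ 2 u P) (huP : u P = 0)
    (hfd : DifferentiableOn ℂ f (ball 0 1)) (hf0 : f 0 = P)
    (hf' : fderiv ℂ f 0 1 = (kobayashiMetric Ω P ξ)⁻¹ • ξ)
    (hb : ∀ z ∈ ball (0:ℂ) 1, 0 ≤ u (f z) ∧ u (f z) ≤ 1)
    (hsh : SubharmonicOn (fun z => u (f z) / norm z ^ 2) (ball (0:ℂ) 1 \ {0})) :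
    leviForm u P ξ ≤ kobayashiMetric Ω P ξ ^ 2 := by
  set k := kobayashiMetric Ω P ξ with hkdef
  set η : Fin n → ℂ := k⁻¹ • ξ with hηdef
  set g : ℂ → ℝ := fun z => u (f z) with hgdef
  have h01 : (0:ℂ) ∈ ball (0:ℂ) 1 := by simp
  have hfan : AnalyticOnNhd ℂ f (ball 0 1) := hfd.analyticOnNhd isOpen_ball
  set f' : ℂ → (Fin n → ℂ) := fun z => fderiv ℂ f z 1 with hf'def
  have hf'an : AnalyticOnNhd ℂ f' (ball 0 1) := by
    intro x hx
    exact ((ContinuousLinearMap.apply ℂ (Fin n → ℂ) 1).comp_analyticOnNhd hfan.fderiv) x hx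
  have hg2 : ContDiffAt ℝ 2 g 0 := by
    have hfc : ContDiffAt ℝ 2 f 0 := ((hfan 0 h01).contDiffAt).restrict_scalars ℝ
    have hu0 : ContDiffAt ℝ 2 u (f 0) := by rw [hf0]; exact hu
    exact hu0.comp 0 hfc
  have hg0 : g 0 = 0 := by rw [hgdef]; simp [hf0, huP]
  -- the key curve computation
  set H := fderiv ℝ (fderiv ℝ u) P with hHdef
  set A := fderiv ℝ u P with hAdef
  set c : Fin n → ℂ := fderiv ℂ f' 0 1 with hcdef
  have hf'0 : f' 0 = η := hf'
  have hcurve : ∀ d : ℂ, (fderiv ℝ (fderiv ℝ g) 0 d) d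
      = (H (d • η)) (d • η) + A (d • d • c) := by
    intro d
    rw [r2_eq_ray hg2 d]
    have hmem : ∀ᶠ t : ℝ in 𝓝 0, t • d ∈ ball (0:ℂ) 1 := by
      have hcont : Continuous fun t : ℝ => t • d := by fun_prop
      apply hcont.continuousAt.preimage_mem_nhds
      rw [show ((0:ℝ) • d) = (0:ℂ) by simp]
      exact isOpen_ball.mem_nhds h01
    have hγ : ∀ᶠ t : ℝ in 𝓝 0, HasDerivAt (fun s : ℝ => f (s • d)) (d • f' (t • d)) t := by
      filter_upwards [hmem] with t ht
      have hdf : HasFDerivAt f ((fderiv ℂ f (t • d)).restrictScalars ℝ) (t • d) :=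
        ((hfan _ ht).differentiableAt).hasFDerivAt.restrictScalars ℝ
      have h1 : HasDerivAt (fun s : ℝ => f (s • d))
          (((fderiv ℂ f (t • d)).restrictScalars ℝ) d) t := by
        have hline : HasDerivAt (fun s : ℝ => s • d) d t := by
          simpa using (hasDerivAt_id t).smul_const d
        simpa [Function.comp_def] using hdf.comp_hasDerivAt t hline
      have h2 : ((fderiv ℂ f (t • d)).restrictScalars ℝ) d = d • f' (t • d) := by
        show fderiv ℂ f (t • d) d = d • f' (t • d)
        rw [hf'def]
        rw [show d = d • (1:ℂ) by simp]
        rw [ContinuousLinearMap.map_smul]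
        simp
      rw [h2] at h1
      exact h1
    have hγ' : HasDerivAt (fun t : ℝ => d • f' (t • d)) (d • d • c) 0 := by
      have hdf' : HasFDerivAt f' ((fderiv ℂ f' 0).restrictScalars ℝ) (0:ℂ) :=
        ((hf'an 0 h01).differentiableAt).hasFDerivAt.restrictScalars ℝ
      have h1 : HasDerivAt (fun s : ℝ => f' (s • d))
          (((fderiv ℂ f' 0).restrictScalars ℝ) d) 0 := by
        have hline : HasDerivAt (fun s : ℝ => s • d) d 0 := by
          simpa using (hasDerivAt_id (0:ℝ)).smul_const d
        have hdf'' : HasFDerivAt f' ((fderiv ℂ f' 0).restrictScalars ℝ)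
            ((fun s : ℝ => s • d) 0) := by simpa using hdf'
        simpa [Function.comp_def] using hdf''.comp_hasDerivAt 0 hline
      have h2 : ((fderiv ℂ f' 0).restrictScalars ℝ) d = d • c := by
        show fderiv ℂ f' 0 d = d • c
        rw [hcdef, show d = d • (1:ℂ) by simp, ContinuousLinearMap.map_smul]
        simp
      rw [h2] at h1
      exact h1.const_smul d
    have hγ0 : (fun t : ℝ => f (t • d)) 0 = P := by
      show f ((0:ℝ) • d) = P
      rw [zero_smul, hf0]
    have hcr := curve_r2 hu hγ0 hγ hγ'
    have h0 : d • f' ((0:ℝ) • d) = d • η := by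
      rw [zero_smul, hf'0]
    rw [h0] at hcr
    exact hcr
  -- leviForm computation
  have hline : ∀ d : ℂ, (fderiv ℝ (fderiv ℝ (fun t : ℂ => u (P + t • ξ))) 0 d) d
      = (H (d • ξ)) (d • ξ) := by
    intro d
    have hL2 : ContDiffAt ℝ 2 (fun t : ℂ => u (P + t • ξ)) 0 := by
      have hinner : ContDiff ℂ 2 (fun t : ℂ => P + t • ξ) :=
        contDiff_const.add (contDiff_id.smul contDiff_const)
      have hinner' : ContDiffAt ℝ 2 (fun t : ℂ => P + t • ξ) 0 :=
        (hinner.restrict_scalars ℝ).contDiffAt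
      have hu' : ContDiffAt ℝ 2 u ((fun t : ℂ => P + t • ξ) 0) := by
        simpa using hu
      exact hu'.comp 0 hinner'
    rw [r2_eq_ray hL2 d]
    have heq : (fun t : ℝ => (fun t : ℂ => u (P + t • ξ)) (t • d))
        = fun t : ℝ => u (P + t • (d • ξ)) := by
      funext t
      show u (P + (t • d) • ξ) = u (P + t • (d • ξ))
      rw [smul_assoc]
    rw [heq]
    have hγ : ∀ᶠ t : ℝ in 𝓝 0, HasDerivAt (fun s : ℝ => P + s • (d • ξ)) (d • ξ) t := by
      apply Eventually.of_forall
      intro t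
      have := ((hasDerivAt_id t).smul_const (d • ξ)).const_add P
      simpa using this
    have := curve_r2 hu (by simp) hγ (hasDerivAt_const 0 (d • ξ))
    rw [this]
    simp
    rfl
  have hlevi : leviForm u P ξ = (1/4) * ((H ξ) ξ + (H (Complex.I • ξ)) (Complex.I • ξ)) := by
    have hL2 : ContDiffAt ℝ 2 (fun t : ℂ => u (P + t • ξ)) 0 := by
      have hinner : ContDiff ℂ 2 (fun t : ℂ => P + t • ξ) :=
        contDiff_const.add (contDiff_id.smul contDiff_const)
      have hinner' : ContDiffAt ℝ 2 (fun t : ℂ => P + t • ξ) 0 :=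
        (hinner.restrict_scalars ℝ).contDiffAt
      have hu' : ContDiffAt ℝ 2 u ((fun t : ℂ => P + t • ξ) 0) := by simpa using hu
      exact hu'.comp 0 hinner'
    rw [leviForm, mixedDeriv_eq hL2, hline 1, hline Complex.I, one_smul]
  -- mixedDeriv g
  have hsum : (fderiv ℝ (fderiv ℝ g) 0 1) 1 + (fderiv ℝ (fderiv ℝ g) 0 Complex.I) Complex.I
      = (H η) η + (H (Complex.I • η)) (Complex.I • η) := by
    rw [hcurve 1, hcurve Complex.I]
    simp only [one_smul, smul_smul, Complex.I_mul_I, neg_one_smul, map_neg]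
    ring
  -- scaling
  have hξη : ξ = k • η := by
    rw [hηdef, smul_inv_smul₀ (ne_of_gt hk)]
  have hIkη : Complex.I • ξ = k • (Complex.I • η) := by
    rw [hξη, smul_comm]
  have hscale : (H ξ) ξ + (H (Complex.I • ξ)) (Complex.I • ξ)
      = k^2 * ((H η) η + (H (Complex.I • η)) (Complex.I • η)) := by
    have h1 : ∀ y : Fin n → ℂ, (H (k • y)) (k • y) = k^2 * (H y) y := by
      intro y
      rw [map_smul]
      simp only [ContinuousLinearMap.coe_smul', Pi.smul_apply, map_smul, smul_eq_mul]
      ring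
    rw [hξη, smul_comm Complex.I k η, h1, h1]
    ring
  -- bound
  have habs1 : norm (1:ℂ) = 1 := by simp
  have habsI : norm Complex.I = 1 := by simp
  have hbound : ∀ R : ℝ, 0 < R → R < 1 →
      leviForm u P ξ * R^2 ≤ k^2 := by
    intro R h0 h1
    have hb1 := oneVar hg2 hg0 hb hsh habs1 h0 h1
    have hbI := oneVar hg2 hg0 hb hsh habsI h0 h1
    have hR2 : (0:ℝ) < R^2 := by positivity
    have hsum4 : (H η) η + (H (Complex.I • η)) (Complex.I • η) ≤ 4/R^2 := by
      rw [← hsum]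
      have : (2:ℝ)/R^2 + 2/R^2 = 4/R^2 := by ring
      linarith [hb1, hbI]
    have hk2 : (0:ℝ) ≤ k^2 := sq_nonneg k
    rw [hlevi, hscale]
    calc 1/4 * (k^2 * ((H η) η + (H (Complex.I • η)) (Complex.I • η))) * R^2
        ≤ 1/4 * (k^2 * (4/R^2)) * R^2 := by
          apply mul_le_mul_of_nonneg_right _ hR2.le
          apply mul_le_mul_of_nonneg_left _ (by norm_num : (0:ℝ) ≤ 1/4)
          exact mul_le_mul_of_nonneg_left hsum4 hk2
    _ = k^2 := by field_simp
  -- limit R → 1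
  have htend : Tendsto (fun R : ℝ => leviForm u P ξ * R^2) (𝓝[<] (1:ℝ))
      (𝓝 (leviForm u P ξ * 1^2)) := by
    apply Tendsto.mono_left _ nhdsWithin_le_nhds
    exact (continuous_const.mul (continuous_pow 2)).tendsto 1
  have hev : ∀ᶠ R in 𝓝[<] (1:ℝ), leviForm u P ξ * R^2 ≤ k^2 := by
    filter_upwards [Ioo_mem_nhdsLT_of_mem (show (1:ℝ) ∈ Ioc 0 1 by constructor <;> norm_num)]
      with R hR
    exact hbound R hR.1 hR.2
  have := le_of_tendsto htend hev
  simpa using this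

/-- The plurisubharmonic metric is bounded above by the Kobayashi metric. -/
theorem stmt16 (n : ℕ) (Ω : Set (Fin n → ℂ)) (hopen : IsOpen Ω)
    (P : Fin n → ℂ) (hP : P ∈ Ω) (ξ : Fin n → ℂ) :
    pshMetric Ω P ξ ≤ kobayashiMetric Ω P ξ := by
  set k := kobayashiMetric Ω P ξ with hkdef
  have hk0 : 0 ≤ k := Real.sInf_nonneg (fun x hx => hx.1.le)
  by_cases hξ : ξ = 0
  · -- leviForm is 0 for every candidate
    apply Real.sSup_le _ hk0
    rintro x ⟨u, hu2, huP, -, hx⟩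
    have hconst : (fun t : ℂ => u (P + t • ξ)) = fun _ : ℂ => u P := by
      funext t
      rw [hξ, smul_zero, add_zero]
    have hlevi : leviForm u P ξ = 0 := by
      rw [leviForm, hconst, mixedDeriv]
      have h1 : ∀ d : ℂ, (fun w : ℂ => fderiv ℝ (fun _ : ℂ => u P) w d) = fun _ : ℂ => 0 := by
        intro d
        funext w
        rw [fderiv_fun_const]
        rfl
      rw [h1 1, h1 Complex.I, fderiv_fun_const]
      norm_num
    rw [hx, hlevi, Real.sqrt_zero]
    exact hk0
  · rcases eq_or_lt_of_le hk0 with hk | hk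
    · -- k = 0 : the candidate set is unbounded, so sSup = 0
      obtain ⟨j₀, hj₀⟩ : ∃ j, ξ j ≠ 0 := by
        by_contra hcon
        push_neg at hcon
        exact hξ (funext hcon)
      have hns : 0 < Complex.normSq (ξ j₀) := Complex.normSq_pos.mpr hj₀
      have hunb : ¬ BddAbove {x : ℝ | ∃ u : (Fin n → ℂ) → ℝ, ContDiffAt ℝ 2 u P ∧ u P = 0 ∧
          (∃ f : ℂ → (Fin n → ℂ), DifferentiableOn ℂ f (ball 0 1) ∧
            (∀ z ∈ ball (0:ℂ) 1, f z ∈ closure Ω) ∧ f 0 = P ∧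
            fderiv ℂ f 0 1 = (kobayashiMetric Ω P ξ)⁻¹ • ξ ∧
            (∀ z ∈ ball (0:ℂ) 1, 0 ≤ u (f z) ∧ u (f z) ≤ 1) ∧
            SubharmonicOn (fun z => u (f z) / norm z ^ 2) (ball (0:ℂ) 1 \ {0})) ∧
          x = Real.sqrt (leviForm u P ξ)} := by
        rintro ⟨b, hb⟩
        set M : ℝ := (b^2 + 1) / Complex.normSq (ξ j₀) with hMdef
        have hMpos : 0 < M := div_pos (by positivity) hns
        set uM : (Fin n → ℂ) → ℝ :=
          fun z => M * ((z j₀ - P j₀).re^2 + (z j₀ - P j₀).im^2) with huMdef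
        have huMP : uM P = 0 := by simp [huMdef]
        have huMcd : ContDiffAt ℝ 2 uM P := by
          have hproj : ContDiff ℝ 2 (fun z : Fin n → ℂ => z j₀ - P j₀) :=
            ((ContinuousLinearMap.proj (R := ℝ) (φ := fun _ : Fin n => ℂ) j₀).contDiff).sub
              contDiff_const
          have hre : ContDiff ℝ 2 (fun z : Fin n → ℂ => (z j₀ - P j₀).re) :=
            (Complex.reCLM.contDiff).comp hproj
          have him : ContDiff ℝ 2 (fun z : Fin n → ℂ => (z j₀ - P j₀).im) :=
            (Complex.imCLM.contDiff).comp hproj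
          exact (contDiff_const.mul ((hre.pow 2).add (him.pow 2))).contDiffAt
        have hfconst : (fun z : ℂ => uM ((fun _ : ℂ => P) z) / norm z ^ 2)
            = fun _ : ℂ => (0:ℝ) := by
          funext z
          simp [huMP]
        have hmem : Real.sqrt (leviForm uM P ξ) ∈ {x : ℝ | ∃ u : (Fin n → ℂ) → ℝ,
            ContDiffAt ℝ 2 u P ∧ u P = 0 ∧
            (∃ f : ℂ → (Fin n → ℂ), DifferentiableOn ℂ f (ball 0 1) ∧
              (∀ z ∈ ball (0:ℂ) 1, f z ∈ closure Ω) ∧ f 0 = P ∧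
              fderiv ℂ f 0 1 = (kobayashiMetric Ω P ξ)⁻¹ • ξ ∧
              (∀ z ∈ ball (0:ℂ) 1, 0 ≤ u (f z) ∧ u (f z) ≤ 1) ∧
              SubharmonicOn (fun z => u (f z) / norm z ^ 2) (ball (0:ℂ) 1 \ {0})) ∧
            x = Real.sqrt (leviForm u P ξ)} := by
          refine ⟨uM, huMcd, huMP, ⟨fun _ => P, differentiableOn_const P,
            fun z _ => subset_closure hP, rfl, ?_, ?_, ?_⟩, rfl⟩
          · rw [fderiv_fun_const]
            rw [← hkdef, ← hk]
            simp
          · intro z _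
            simp [huMP]
          · constructor
            · rw [hfconst]
              exact continuousOn_const
            · intro z r hr hsub
              rw [hfconst]
              simp [Real.pi_nonneg]
        have hfun : (fun t : ℂ => uM (P + t • ξ))
            = fun t : ℂ => (M * Complex.normSq (ξ j₀)) * (t.re^2 + t.im^2) := by
          funext t
          show M * (((P + t • ξ) j₀ - P j₀).re^2 + ((P + t • ξ) j₀ - P j₀).im^2) = _
          have h1 : (P + t • ξ) j₀ - P j₀ = t * ξ j₀ := by
            simp [Pi.add_apply, Pi.smul_apply, smul_eq_mul]
          rw [h1]
          have h2 : (t * ξ j₀).re^2 + (t * ξ j₀).im^2 = Complex.normSq (t * ξ j₀) := by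
            rw [Complex.normSq_apply]
            ring
          rw [h2, map_mul, Complex.normSq_apply, Complex.normSq_apply]
          ring
        have hlev : leviForm uM P ξ = b^2 + 1 := by
          rw [leviForm, hfun, mixedDeriv_quad, hMdef]
          field_simp
        have hbb := hb hmem
        rw [hlev] at hbb
        have hfin : b < Real.sqrt (b^2+1) := by
          have h1 : b ≤ |b| := le_abs_self b
          have h2 : |b| = Real.sqrt (b^2) := (Real.sqrt_sq_eq_abs b).symm
          have h3 : Real.sqrt (b^2) < Real.sqrt (b^2+1) := by
            apply Real.sqrt_lt_sqrt (sq_nonneg b)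
            linarith
          linarith
        linarith
      rw [pshMetric, Real.sSup_of_not_bddAbove hunb]
      exact hk0
    · -- main case
      apply Real.sSup_le _ hk0
      rintro x ⟨u, hu2, huP, ⟨f, hfd, hfmem, hf0, hf', hb, hsh⟩, hx⟩
      have hle := key Ω P ξ hk u f hu2 huP hfd hf0 hf' hb hsh
      rw [hx]
      calc Real.sqrt (leviForm u P ξ) ≤ Real.sqrt (k^2) := Real.sqrt_le_sqrt hle
      _ = k := by rw [Real.sqrt_sq hk0]
end
end
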